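/- arXiv:1808.07600 — 5 statements merged into one kernel-verified Lean document; each statement's English description precedes it below -/
import Mathlib

section
/- Let p be an integer-valued supermodular set-function on the subsets of a nonempty finite set S with p(∅) = 0, and let m be an element of the M-convex set Ḃ(p). Then the following four conditions are pairwise equivalent: (A) there exist no elements s, t ∈ S such that m(t) ≥ m(s) + 2 and m + χ_s − χ_t ∈ Ḃ(p); (B) there exists a chain ∅ ⊊ C₁ ⊊ C₂ ⊊ ⋯ ⊊ C_ℓ = S such that each C_i is an m-top set and is m-tight with respect to p, and m is near-uniform on each difference set S_i := C_i ∖ C_{i−1} (where C₀ := ∅); (C1) m is decreasingly minimal in Ḃ(p); (C2) m is increasingly maximal in Ḃ(p). -/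
open Finset

variable {α : Type*}

/-- Integer-valued supermodular set-function. -/
def Supermodular [DecidableEq α] (p : Finset α → ℤ) : Prop :=
  ∀ X Y : Finset α, p X + p Y ≤ p (X ∩ Y) + p (X ∪ Y)

/-- The M-convex set `Ḃ(p)` of integral elements of the base-polyhedron `B'(p)`:
all `m : α → ℤ` with `m̃(X) ≥ p(X)` for every `X` and `m̃(S) = p(S)`. -/
def Bdot [Fintype α] (p : Finset α → ℤ) : Set (α → ℤ) :=
  {m | (∀ X : Finset α, p X ≤ ∑ s ∈ X, m s) ∧ (∑ s, m s) = p Finset.univ}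

/-- `x↓`: the values of `x` arranged in nonincreasing order. -/
def sortedDesc [Fintype α] (x : α → ℤ) : List ℤ :=
  ((Finset.univ.val.map x).sort (· ≤ ·)).reverse

/-- `x↑`: the values of `x` arranged in nondecreasing order. -/
def sortedAsc [Fintype α] (x : α → ℤ) : List ℤ :=
  (Finset.univ.val.map x).sort (· ≤ ·)

/-- `x ≤_dec y`: `x↓` is lexicographically less than or equal to `y↓`. -/
def DecLE [Fintype α] (x y : α → ℤ) : Prop :=
  sortedDesc x = sortedDesc y ∨ List.Lex (· < ·) (sortedDesc x) (sortedDesc y)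

/-- `x ≤_inc y`: `x↑` is lexicographically less than or equal to `y↑`. -/
def IncLE [Fintype α] (x y : α → ℤ) : Prop :=
  sortedAsc x = sortedAsc y ∨ List.Lex (· < ·) (sortedAsc x) (sortedAsc y)

/-- `m` is a decreasingly minimal element of `Bdot p`. -/
def DecMin [Fintype α] (p : Finset α → ℤ) (m : α → ℤ) : Prop :=
  m ∈ Bdot p ∧ ∀ y ∈ Bdot p, DecLE m y


section Aux
variable {α : Type*}

/-! ### Auxiliary list-counting lemmas -/

private def cntGe (θ : ℤ) (l : List ℤ) : ℕ := l.countP (fun v => decide (θ ≤ v))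

private lemma cntGe_cons (θ a : ℤ) (l : List ℤ) :
    cntGe θ (a :: l) = cntGe θ l + (if θ ≤ a then 1 else 0) := by
  simp [cntGe, List.countP_cons]

private lemma cntGe_eq_zero {θ : ℤ} {l : List ℤ} (h : ∀ v ∈ l, v < θ) : cntGe θ l = 0 := by
  rw [cntGe, List.countP_eq_zero]; intro v hv; simpa using not_le.2 (h v hv)

private lemma cntGe_eq_length {θ : ℤ} {l : List ℤ} (h : ∀ v ∈ l, θ ≤ v) :
    cntGe θ l = l.length := by
  rw [cntGe, List.countP_eq_length]; intro v hv; simpa using h v hv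

private lemma cntGe_le_length (θ : ℤ) (l : List ℤ) : cntGe θ l ≤ l.length :=
  List.countP_le_length

private lemma cntGe_pos {θ : ℤ} {l : List ℤ} (h : 0 < cntGe θ l) : ∃ v ∈ l, θ ≤ v := by
  rw [cntGe, List.countP_pos_iff] at h; simpa using h

private lemma cntGe_pos_of_mem {θ a : ℤ} {l : List ℤ} (ha : a ∈ l) (h : θ ≤ a) :
    0 < cntGe θ l := by
  rw [cntGe, List.countP_pos_iff]; exact ⟨a, ha, by simpa using h⟩

/-- descending sorted lists: lex implies count witness -/
private lemma desc_lex_counts : ∀ {l₁ l₂ : List ℤ}, l₁.Pairwise (· ≥ ·) → l₂.Pairwise (· ≥ ·) →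
    List.Lex (· < ·) l₁ l₂ →
    ∃ θ, cntGe θ l₁ < cntGe θ l₂ ∧ ∀ θ', θ < θ' → cntGe θ' l₁ = cntGe θ' l₂ := by
  intro l₁ l₂ h₁ h₂ hlex
  induction hlex with
  | @nil b t₂ =>
      refine ⟨b, ?_, ?_⟩
      · have : 0 < cntGe b (b :: t₂) := cntGe_pos_of_mem (List.mem_cons_self) le_rfl
        simpa [cntGe] using this
      · intro θ' hθ'
        have hz : cntGe θ' (b :: t₂) = 0 := by
          apply cntGe_eq_zero
          intro v hv
          rcases List.mem_cons.1 hv with rfl | hv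
          · exact hθ'
          · exact lt_of_le_of_lt ((List.pairwise_cons.1 h₂).1 v hv) hθ'
        rw [show cntGe θ' ([] : List ℤ) = 0 from rfl, hz]
  | @rel a t₁ b t₂ hab =>
      refine ⟨b, ?_, ?_⟩
      · have h1 : cntGe b (a :: t₁) = 0 := by
          apply cntGe_eq_zero
          intro v hv
          rcases List.mem_cons.1 hv with rfl | hv
          · exact hab
          · exact lt_of_le_of_lt ((List.pairwise_cons.1 h₁).1 v hv) hab
        have h2 : 0 < cntGe b (b :: t₂) := cntGe_pos_of_mem (List.mem_cons_self) le_rfl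
        omega
      · intro θ' hθ'
        have h1 : cntGe θ' (a :: t₁) = 0 := by
          apply cntGe_eq_zero
          intro v hv
          rcases List.mem_cons.1 hv with rfl | hv
          · exact hab.trans hθ'
          · exact lt_of_le_of_lt ((List.pairwise_cons.1 h₁).1 v hv) (hab.trans hθ')
        have h2 : cntGe θ' (b :: t₂) = 0 := by
          apply cntGe_eq_zero
          intro v hv
          rcases List.mem_cons.1 hv with rfl | hv
          · exact hθ'
          · exact lt_of_le_of_lt ((List.pairwise_cons.1 h₂).1 v hv) hθ'
        rw [h1, h2]
  | @cons a t₁ t₂ hlex ih =>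
      obtain ⟨θ, hθ1, hθ2⟩ := ih (List.pairwise_cons.1 h₁).2 (List.pairwise_cons.1 h₂).2
      refine ⟨θ, ?_, ?_⟩
      · rw [cntGe_cons, cntGe_cons]; omega
      · intro θ' hθ'
        rw [cntGe_cons, cntGe_cons, hθ2 θ' hθ']

/-- descending sorted lists: count witness implies lex -/
private lemma desc_counts_lex : ∀ (l₁ l₂ : List ℤ), l₁.Pairwise (· ≥ ·) → l₂.Pairwise (· ≥ ·) →
    l₁.length = l₂.length →
    (∃ θ, cntGe θ l₁ < cntGe θ l₂ ∧ ∀ θ', θ < θ' → cntGe θ' l₁ = cntGe θ' l₂) →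
    List.Lex (· < ·) l₁ l₂
  | [], [], _, _, _, ⟨θ, hθ, _⟩ => absurd hθ (by simp [cntGe])
  | [], b :: t₂, _, _, hlen, _ => by simp at hlen
  | a :: t₁, [], _, _, hlen, _ => by simp at hlen
  | a :: t₁, b :: t₂, h₁, h₂, hlen, ⟨θ, hθ, heq⟩ => by
    rcases lt_trichotomy a b with hab | hab | hab
    · exact List.Lex.rel hab
    · subst hab
      apply List.Lex.cons
      apply desc_counts_lex t₁ t₂ (List.pairwise_cons.1 h₁).2 (List.pairwise_cons.1 h₂).2
        (by simpa using hlen)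
      refine ⟨θ, ?_, ?_⟩
      · have := cntGe_cons θ a t₁; have := cntGe_cons θ a t₂; omega
      · intro θ' hθ'
        have h1 := cntGe_cons θ' a t₁; have h2 := cntGe_cons θ' a t₂
        have := heq θ' hθ'; omega
    · exfalso
      by_cases hθa : θ < a
      · have h1 : 0 < cntGe a (a :: t₁) := cntGe_pos_of_mem (List.mem_cons_self) le_rfl
        have h2 : cntGe a (b :: t₂) = 0 := by
          apply cntGe_eq_zero
          intro v hv
          rcases List.mem_cons.1 hv with rfl | hv
          · exact hab
          · exact lt_of_le_of_lt ((List.pairwise_cons.1 h₂).1 v hv) hab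
        have := heq a hθa; omega
      · push_neg at hθa
        obtain ⟨v, hv, hθv⟩ := cntGe_pos (lt_of_le_of_lt (Nat.zero_le _) hθ)
        have hvb : v ≤ b := by
          rcases List.mem_cons.1 hv with rfl | hv
          · exact le_rfl
          · exact (List.pairwise_cons.1 h₂).1 v hv
        omega

/-- ascending sorted lists: lex implies count witness -/
private lemma asc_lex_counts : ∀ (l₁ l₂ : List ℤ), l₁.Pairwise (· ≤ ·) → l₂.Pairwise (· ≤ ·) →
    l₁.length = l₂.length → List.Lex (· < ·) l₁ l₂ →
    ∃ θ, cntGe θ l₁ < cntGe θ l₂ ∧ ∀ θ', θ' < θ → cntGe θ' l₁ = cntGe θ' l₂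
  | [], l₂, _, _, hlen, hlex => by
      cases l₂ with
      | nil => exact absurd hlex (by intro h; cases h)
      | cons b t₂ => simp at hlen
  | a :: t₁, [], _, _, _, hlex => by cases hlex
  | a :: t₁, b :: t₂, h₁, h₂, hlen, hlex => by
      have hlen' : t₁.length = t₂.length := by simpa using hlen
      cases hlex with
      | cons hlex' =>
          obtain ⟨θ, hθ, heq⟩ := asc_lex_counts t₁ t₂ (List.pairwise_cons.1 h₁).2
            (List.pairwise_cons.1 h₂).2 hlen' hlex'
          refine ⟨θ, ?_, ?_⟩
          · have := cntGe_cons θ a t₁; have := cntGe_cons θ a t₂; omega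
          · intro θ' hθ'
            have h1 := cntGe_cons θ' a t₁; have h2 := cntGe_cons θ' a t₂
            have := heq θ' hθ'; omega
      | rel hab =>
          refine ⟨a + 1, ?_, ?_⟩
          · have h1 : cntGe (a + 1) (a :: t₁) ≤ t₁.length := by
              rw [cntGe_cons, if_neg (by omega : ¬ (a : ℤ) + 1 ≤ a)]
              simpa using cntGe_le_length (a + 1) t₁
            have h2 : cntGe (a + 1) (b :: t₂) = t₂.length + 1 := by
              rw [cntGe_eq_length (by
                intro v hv
                rcases List.mem_cons.1 hv with rfl | hv
                · omega
                · have := (List.pairwise_cons.1 h₂).1 v hv; omega)]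
              simp
            omega
          · intro θ' hθ'
            rw [cntGe_eq_length (by
                intro v hv
                rcases List.mem_cons.1 hv with rfl | hv
                · omega
                · have := (List.pairwise_cons.1 h₁).1 v hv; omega),
              cntGe_eq_length (by
                intro v hv
                rcases List.mem_cons.1 hv with rfl | hv
                · omega
                · have := (List.pairwise_cons.1 h₂).1 v hv; omega)]
            simpa using hlen

/-- ascending sorted lists: count witness implies lex -/
private lemma asc_counts_lex : ∀ (l₁ l₂ : List ℤ), l₁.Pairwise (· ≤ ·) → l₂.Pairwise (· ≤ ·) →
    l₁.length = l₂.length →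
    (∃ θ, cntGe θ l₁ < cntGe θ l₂ ∧ ∀ θ', θ' < θ → cntGe θ' l₁ = cntGe θ' l₂) →
    List.Lex (· < ·) l₁ l₂
  | [], [], _, _, _, ⟨θ, hθ, _⟩ => absurd hθ (by simp [cntGe])
  | [], b :: t₂, _, _, hlen, _ => by simp at hlen
  | a :: t₁, [], _, _, hlen, _ => by simp at hlen
  | a :: t₁, b :: t₂, h₁, h₂, hlen, ⟨θ, hθ, heq⟩ => by
    have hlen' : t₁.length = t₂.length := by simpa using hlen
    rcases lt_trichotomy a b with hab | hab | hab
    · exact List.Lex.rel hab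
    · subst hab
      apply List.Lex.cons
      apply asc_counts_lex t₁ t₂ (List.pairwise_cons.1 h₁).2 (List.pairwise_cons.1 h₂).2 hlen'
      refine ⟨θ, ?_, ?_⟩
      · have := cntGe_cons θ a t₁; have := cntGe_cons θ a t₂; omega
      · intro θ' hθ'
        have h1 := cntGe_cons θ' a t₁; have h2 := cntGe_cons θ' a t₂
        have := heq θ' hθ'; omega
    · exfalso
      have hall₁ : ∀ θ'', θ'' ≤ b + 1 → cntGe θ'' (a :: t₁) = t₁.length + 1 := by
        intro θ'' hθ''
        rw [cntGe_eq_length (by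
          intro v hv
          rcases List.mem_cons.1 hv with rfl | hv
          · omega
          · have := (List.pairwise_cons.1 h₁).1 v hv; omega)]
        simp
      by_cases hc : b + 1 < θ
      · have h2 : cntGe (b + 1) (b :: t₂) ≤ t₂.length := by
          rw [cntGe_cons, if_neg (by omega : ¬ (b : ℤ) + 1 ≤ b)]
          simpa using cntGe_le_length (b + 1) t₂
        have := heq (b + 1) hc
        have := hall₁ (b + 1) le_rfl
        omega
      · push_neg at hc
        have h1 := hall₁ θ hc
        have h2 : cntGe θ (b :: t₂) ≤ t₂.length + 1 := by
          have := cntGe_le_length θ (b :: t₂); simpa using this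
        omega

end Aux

section Aux2
variable {α : Type*}

/-! ### Threshold counts of a vector -/

private def Fcnt [Fintype α] (x : α → ℤ) (θ : ℤ) : ℕ :=
  (Finset.univ.filter (fun s => θ ≤ x s)).card

private lemma sortedAsc_sorted [Fintype α] (x : α → ℤ) : (sortedAsc x).Pairwise (· ≤ ·) :=
  Multiset.pairwise_sort _ _

private lemma sortedDesc_sorted [Fintype α] (x : α → ℤ) : (sortedDesc x).Pairwise (· ≥ ·) := by
  rw [sortedDesc]
  exact List.pairwise_reverse.2 (Multiset.pairwise_sort _ (· ≤ ·))

private lemma sortedAsc_length [Fintype α] (x : α → ℤ) :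
    (sortedAsc x).length = Fintype.card α := by
  simp [sortedAsc]

private lemma sortedDesc_length [Fintype α] (x : α → ℤ) :
    (sortedDesc x).length = Fintype.card α := by
  simp [sortedDesc]

private lemma cntGe_sortedAsc [Fintype α] (x : α → ℤ) (θ : ℤ) :
    cntGe θ (sortedAsc x) = Fcnt x θ := by
  have : (sortedAsc x : Multiset ℤ) = Finset.univ.val.map x := Multiset.sort_eq _ _
  rw [cntGe, Fcnt, ← Multiset.coe_countP]
  rw [this, Multiset.countP_map]
  rfl

private lemma cntGe_sortedDesc [Fintype α] (x : α → ℤ) (θ : ℤ) :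
    cntGe θ (sortedDesc x) = Fcnt x θ := by
  rw [sortedDesc, cntGe, List.countP_reverse]
  exact cntGe_sortedAsc x θ

/-! ### Indicator sums over intervals -/

private lemma ind_sum_Ioc (a b c : ℤ) (hcb : c ≤ b) :
    ∑ θ' ∈ Finset.Ioc a b, (if θ' ≤ c then (1 : ℤ) else 0) = max (c - a) 0 := by
  rw [← Finset.sum_filter]
  have hfil : Finset.filter (fun θ' => θ' ≤ c) (Finset.Ioc a b) = Finset.Ioc a c := by
    ext θ'
    simp only [Finset.mem_filter, Finset.mem_Ioc]
    omega
  rw [hfil]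
  simp only [Finset.sum_const, Int.card_Ioc, smul_eq_mul, mul_one]
  rw [nsmul_eq_mul, mul_one]; exact Int.toNat_eq_max _

private lemma ind_sum_Ioc' (a b c : ℤ) (hac : a ≤ c) :
    ∑ θ' ∈ Finset.Ioc a b, (if c < θ' then (1 : ℤ) else 0) = max (b - c) 0 := by
  rw [← Finset.sum_filter]
  have hfil : Finset.filter (fun θ' => c < θ') (Finset.Ioc a b) = Finset.Ioc c b := by
    ext θ'
    simp only [Finset.mem_filter, Finset.mem_Ioc]
    omega
  rw [hfil]
  simp only [Finset.sum_const, Int.card_Ioc, smul_eq_mul, mul_one]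
  rw [nsmul_eq_mul, mul_one]; exact Int.toNat_eq_max _

private lemma U_ident [Fintype α] (x : α → ℤ) (β θ₁ : ℤ) (hub : ∀ s, x s ≤ θ₁) :
    ∑ s, max (x s - β) 0 = ∑ θ' ∈ Finset.Ioc β θ₁, (Fcnt x θ' : ℤ) := by
  have : ∀ θ', (Fcnt x θ' : ℤ) = ∑ s, (if θ' ≤ x s then (1 : ℤ) else 0) := by
    intro θ'
    rw [Fcnt, Finset.card_filter]
    push_cast
    rfl
  simp_rw [this]
  rw [Finset.sum_comm]
  apply Finset.sum_congr rfl
  intro s _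
  exact (ind_sum_Ioc β θ₁ (x s) (hub s)).symm

private lemma V_ident [Fintype α] (x : α → ℤ) (θ θ₀ : ℤ) (hlb : ∀ s, θ₀ ≤ x s) :
    ∑ s, max (θ - x s) 0
      = ∑ θ' ∈ Finset.Ioc θ₀ θ, ((Finset.univ.filter (fun s => x s < θ')).card : ℤ) := by
  have : ∀ θ', ((Finset.univ.filter (fun s => x s < θ')).card : ℤ)
      = ∑ s, (if x s < θ' then (1 : ℤ) else 0) := by
    intro θ'
    rw [Finset.card_filter]
    push_cast
    rfl
  simp_rw [this]
  rw [Finset.sum_comm]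
  apply Finset.sum_congr rfl
  intro s _
  exact (ind_sum_Ioc' θ₀ θ (x s) (hlb s)).symm

/-- contradiction lemma for the decreasing side -/
private lemma sum_contra_dec [Fintype α] [DecidableEq α] (m y : α → ℤ) (D : Finset α) (θ : ℤ)
    (hyD : ∑ s ∈ D, m s ≤ ∑ s ∈ D, y s)
    (hon : ∀ s ∈ D, θ - 1 ≤ m s) (hoff : ∀ s ∉ D, m s ≤ θ - 1)
    (hlt : Fcnt y θ < Fcnt m θ) (heq : ∀ θ', θ < θ' → Fcnt m θ' = Fcnt y θ') : False := by
  obtain ⟨s₀, hs₀⟩ : ∃ s₀ : α, θ ≤ m s₀ := by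
    have : 0 < Fcnt m θ := by omega
    rw [Fcnt, Finset.card_pos] at this
    obtain ⟨s₀, hs₀⟩ := this
    exact ⟨s₀, (Finset.mem_filter.1 hs₀).2⟩
  have hne : (Finset.univ : Finset α).Nonempty := ⟨s₀, Finset.mem_univ _⟩
  set θ₁ : ℤ := max θ ((Finset.univ.image fun s => max (m s) (y s)).max' (hne.image _)) with hθ₁
  have hub : ∀ s, m s ≤ θ₁ ∧ y s ≤ θ₁ := by
    intro s
    have h := Finset.le_max' _ _ (Finset.mem_image_of_mem (fun s => max (m s) (y s))
      (Finset.mem_univ s))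
    constructor
    · exact le_trans (le_trans (le_max_left _ _) h) (le_max_right _ _)
    · exact le_trans (le_trans (le_max_right _ _) h) (le_max_right _ _)
  have hθθ₁ : θ ≤ θ₁ := le_max_left _ _
  have hUm := U_ident m (θ - 1) θ₁ (fun s => (hub s).1)
  have hUy := U_ident y (θ - 1) θ₁ (fun s => (hub s).2)
  have hsplit : Finset.Ioc (θ - 1) θ₁ = insert θ (Finset.Ioc θ θ₁) := by
    ext θ'
    simp only [Finset.mem_Ioc, Finset.mem_insert]
    omega
  have hdiff : ∑ s, max (m s - (θ - 1)) 0 - ∑ s, max (y s - (θ - 1)) 0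
      = (Fcnt m θ : ℤ) - (Fcnt y θ : ℤ) := by
    rw [hUm, hUy, hsplit, Finset.sum_insert (by simp), Finset.sum_insert (by simp)]
    have : ∑ θ' ∈ Finset.Ioc θ θ₁, (Fcnt m θ' : ℤ) = ∑ θ' ∈ Finset.Ioc θ θ₁, (Fcnt y θ' : ℤ) := by
      apply Finset.sum_congr rfl
      intro θ' hθ'
      rw [heq θ' (Finset.mem_Ioc.1 hθ').1]
    omega
  have hUmD : ∑ s, max (m s - (θ - 1)) 0 = ∑ s ∈ D, (m s - (θ - 1)) := by
    rw [← Finset.sum_subset (Finset.subset_univ D)]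
    · apply Finset.sum_congr rfl
      intro s hs
      exact max_eq_left (by have := hon s hs; omega)
    · intro s _ hs
      exact max_eq_right (by have := hoff s hs; omega)
  have hUyD : ∑ s ∈ D, (y s - (θ - 1)) ≤ ∑ s, max (y s - (θ - 1)) 0 := by
    calc ∑ s ∈ D, (y s - (θ - 1)) ≤ ∑ s ∈ D, max (y s - (θ - 1)) 0 :=
          Finset.sum_le_sum (fun s _ => le_max_left _ _)
      _ ≤ ∑ s, max (y s - (θ - 1)) 0 :=
          Finset.sum_le_sum_of_subset_of_nonneg (Finset.subset_univ D)
            (fun s _ _ => le_max_right _ _)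
  have hfinal : ∑ s, max (m s - (θ - 1)) 0 ≤ ∑ s, max (y s - (θ - 1)) 0 := by
    rw [hUmD]
    refine le_trans ?_ hUyD
    have e1 : ∑ s ∈ D, (m s - (θ - 1)) = ∑ s ∈ D, m s - D.card • (θ - 1) := by
      rw [Finset.sum_sub_distrib, Finset.sum_const]
    have e2 : ∑ s ∈ D, (y s - (θ - 1)) = ∑ s ∈ D, y s - D.card • (θ - 1) := by
      rw [Finset.sum_sub_distrib, Finset.sum_const]
    rw [e1, e2]
    exact sub_le_sub_right hyD _
  have hlt' : (Fcnt y θ : ℤ) < (Fcnt m θ : ℤ) := by exact_mod_cast hlt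
  linarith [hdiff, hfinal, hlt']

/-- contradiction lemma for the increasing side -/
private lemma sum_contra_inc [Fintype α] [DecidableEq α] (m y : α → ℤ) (D : Finset α) (θ : ℤ)
    (hyD : ∑ s ∈ Dᶜ, y s ≤ ∑ s ∈ Dᶜ, m s)
    (hon : ∀ s ∈ D, θ ≤ m s) (hoff : ∀ s ∉ D, m s ≤ θ)
    (hlt : Fcnt m θ < Fcnt y θ) (heq : ∀ θ', θ' < θ → Fcnt m θ' = Fcnt y θ') : False := by
  obtain ⟨s₀, hs₀⟩ : ∃ s₀ : α, θ ≤ y s₀ := by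
    have : 0 < Fcnt y θ := by omega
    rw [Fcnt, Finset.card_pos] at this
    obtain ⟨s₀, hs₀⟩ := this
    exact ⟨s₀, (Finset.mem_filter.1 hs₀).2⟩
  have hne : (Finset.univ : Finset α).Nonempty := ⟨s₀, Finset.mem_univ _⟩
  set θ₀ : ℤ := min (θ - 1) ((Finset.univ.image fun s => min (m s) (y s)).min' (hne.image _))
    with hθ₀
  have hlb : ∀ s, θ₀ ≤ m s ∧ θ₀ ≤ y s := by
    intro s
    have h := Finset.min'_le _ _ (Finset.mem_image_of_mem (fun s => min (m s) (y s))
      (Finset.mem_univ s))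
    constructor
    · exact le_trans (le_trans (min_le_right _ _) h) (min_le_left _ _)
    · exact le_trans (le_trans (min_le_right _ _) h) (min_le_right _ _)
  have hθ₀θ : θ₀ ≤ θ - 1 := min_le_left _ _
  have hVm := V_ident m θ θ₀ (fun s => (hlb s).1)
  have hVy := V_ident y θ θ₀ (fun s => (hlb s).2)
  have hsplit : Finset.Ioc θ₀ θ = insert θ (Finset.Ioc θ₀ (θ - 1)) := by
    ext θ'
    simp only [Finset.mem_Ioc, Finset.mem_insert]
    omega
  have hcompl : ∀ (x : α → ℤ) (θ' : ℤ),
      ((Finset.univ.filter (fun s => x s < θ')).card : ℤ)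
        = (Fintype.card α : ℤ) - (Fcnt x θ' : ℤ) := by
    intro x θ'
    have : Finset.univ.filter (fun s => x s < θ')
        = (Finset.univ.filter (fun s => θ' ≤ x s))ᶜ := by
      ext s
      simp [not_le]
    rw [this, Finset.card_compl]
    simp only [Fcnt, Finset.card_univ]
    have := Finset.card_filter_le (Finset.univ : Finset α) (fun s => θ' ≤ x s)
    rw [Finset.card_univ] at this
    omega
  have hdiff : ∑ s, max (θ - m s) 0 - ∑ s, max (θ - y s) 0
      = (Fcnt y θ : ℤ) - (Fcnt m θ : ℤ) := by
    rw [hVm, hVy, hsplit, Finset.sum_insert (by simp), Finset.sum_insert (by simp)]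
    have heq2 : ∑ θ' ∈ Finset.Ioc θ₀ (θ - 1), ((Finset.univ.filter (fun s => m s < θ')).card : ℤ)
        = ∑ θ' ∈ Finset.Ioc θ₀ (θ - 1), ((Finset.univ.filter (fun s => y s < θ')).card : ℤ) := by
      apply Finset.sum_congr rfl
      intro θ' hθ'
      rw [hcompl, hcompl, heq θ' (by have := (Finset.mem_Ioc.1 hθ').2; omega)]
    rw [hcompl m θ, hcompl y θ]
    omega
  have hVmD : ∑ s, max (θ - m s) 0 = ∑ s ∈ Dᶜ, (θ - m s) := by
    rw [← Finset.sum_subset (Finset.subset_univ Dᶜ)]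
    · apply Finset.sum_congr rfl
      intro s hs
      exact max_eq_left (by have := hoff s (Finset.mem_compl.1 hs); omega)
    · intro s _ hs
      exact max_eq_right (by have := hon s (by simpa using hs); omega)
  have hVyD : ∑ s ∈ Dᶜ, (θ - y s) ≤ ∑ s, max (θ - y s) 0 := by
    calc ∑ s ∈ Dᶜ, (θ - y s) ≤ ∑ s ∈ Dᶜ, max (θ - y s) 0 :=
          Finset.sum_le_sum (fun s _ => le_max_left _ _)
      _ ≤ ∑ s, max (θ - y s) 0 :=
          Finset.sum_le_sum_of_subset_of_nonneg (Finset.subset_univ _)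
            (fun s _ _ => le_max_right _ _)
  have hfinal : ∑ s, max (θ - m s) 0 ≤ ∑ s, max (θ - y s) 0 := by
    rw [hVmD]
    refine le_trans ?_ hVyD
    have e1 : ∑ s ∈ Dᶜ, (θ - m s) = Dᶜ.card • θ - ∑ s ∈ Dᶜ, m s := by
      rw [Finset.sum_sub_distrib, Finset.sum_const]
    have e2 : ∑ s ∈ Dᶜ, (θ - y s) = Dᶜ.card • θ - ∑ s ∈ Dᶜ, y s := by
      rw [Finset.sum_sub_distrib, Finset.sum_const]
    rw [e1, e2]
    exact sub_le_sub_left hyD _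
  have hlt' : (Fcnt m θ : ℤ) < (Fcnt y θ : ℤ) := by exact_mod_cast hlt
  linarith [hdiff, hfinal, hlt']

end Aux2

section Tight
variable [Fintype α] [DecidableEq α] (p : Finset α → ℤ) (m : α → ℤ)

/-- tight sets are closed under intersection and union -/
private lemma tight_inter_union (hp : Supermodular p) (hm : m ∈ Bdot p)
    {X Y : Finset α} (hX : ∑ s ∈ X, m s = p X) (hY : ∑ s ∈ Y, m s = p Y) :
    (∑ s ∈ X ∩ Y, m s = p (X ∩ Y)) ∧ (∑ s ∈ X ∪ Y, m s = p (X ∪ Y)) := by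
  have h1 := hp X Y
  have h2 := hm.1 (X ∩ Y)
  have h3 := hm.1 (X ∪ Y)
  have h4 : ∑ s ∈ X ∪ Y, m s + ∑ s ∈ X ∩ Y, m s = ∑ s ∈ X, m s + ∑ s ∈ Y, m s :=
    Finset.sum_union_inter
  constructor <;> omega

/-- the smallest `m`-tight set containing `t`: intersection of all of them -/
private def Tmin (t : α) : Finset α :=
  Finset.univ.filter (fun s => ∀ X : Finset α, t ∈ X → (∑ u ∈ X, m u = p X) → s ∈ X)

private lemma mem_Tmin_self (t : α) : t ∈ Tmin p m t := by
  simp only [Tmin, Finset.mem_filter, Finset.mem_univ, true_and]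
  intro X hX _
  exact hX

private lemma Tmin_subset {t : α} {X : Finset α} (htX : t ∈ X) (hX : ∑ u ∈ X, m u = p X) :
    Tmin p m t ⊆ X := by
  intro s hs
  simp only [Tmin, Finset.mem_filter, Finset.mem_univ, true_and] at hs
  exact hs X htX hX

private lemma Tmin_tight (hp : Supermodular p) (hm : m ∈ Bdot p) (t : α) :
    ∑ u ∈ Tmin p m t, m u = p (Tmin p m t) := by
  -- take a minimum-cardinality tight set containing t
  set F : Finset (Finset α) :=
    Finset.univ.filter (fun X => t ∈ X ∧ ∑ u ∈ X, m u = p X) with hF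
  have hFne : F.Nonempty := by
    use Finset.univ
    simp only [hF, Finset.mem_filter, Finset.mem_univ, true_and]
    exact hm.2
  obtain ⟨X₀, hX₀F, hX₀min⟩ := Finset.exists_min_image F Finset.card hFne
  simp only [hF, Finset.mem_filter, Finset.mem_univ, true_and] at hX₀F
  obtain ⟨htX₀, hX₀tight⟩ := hX₀F
  -- X₀ is contained in every tight set containing t
  have hX₀sub : ∀ X : Finset α, t ∈ X → (∑ u ∈ X, m u = p X) → X₀ ⊆ X := by
    intro X htX hXtight
    have hIT := (tight_inter_union p m hp hm hX₀tight hXtight).1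
    have hImem : X₀ ∩ X ∈ F := by
      simp only [hF, Finset.mem_filter, Finset.mem_univ, true_and]
      exact ⟨Finset.mem_inter.2 ⟨htX₀, htX⟩, hIT⟩
    have hle := hX₀min _ hImem
    have hsub : X₀ ∩ X ⊆ X₀ := Finset.inter_subset_left
    have : X₀ ∩ X = X₀ := Finset.eq_of_subset_of_card_le hsub (by omega)
    intro s hs
    rw [← this] at hs
    exact (Finset.mem_inter.1 hs).2
  -- hence X₀ = Tmin
  have : Tmin p m t = X₀ := by
    apply Finset.Subset.antisymm
    · exact Tmin_subset p m htX₀ hX₀tight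
    · intro s hs
      simp only [Tmin, Finset.mem_filter, Finset.mem_univ, true_and]
      intro X htX hXtight
      exact hX₀sub X htX hXtight hs
  rw [this]
  exact hX₀tight

/-- under condition (A), every element of `Tmin t` has value at least `m t - 1` -/
private lemma Tmin_values (hm : m ∈ Bdot p)
    (hA : ¬ ∃ s t : α, m s + 2 ≤ m t ∧
      (fun v => m v + (if v = s then 1 else 0) - (if v = t then 1 else 0)) ∈ Bdot p)
    {t s : α} (hs : s ∈ Tmin p m t) : m t ≤ m s + 1 := by
  by_contra hcon
  push_neg at hcon
  have hst : m s + 2 ≤ m t := by omega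
  apply hA
  refine ⟨s, t, hst, ?_, ?_⟩
  · -- membership: lower bounds
    intro X
    have hsum : ∑ v ∈ X, (m v + (if v = s then 1 else 0) - (if v = t then 1 else 0))
        = ∑ v ∈ X, m v + (if s ∈ X then 1 else 0) - (if t ∈ X then 1 else 0) := by
      rw [Finset.sum_sub_distrib, Finset.sum_add_distrib]
      rw [Finset.sum_ite_eq' X s (fun _ => (1 : ℤ)), Finset.sum_ite_eq' X t (fun _ => (1 : ℤ))]
    rw [hsum]
    by_cases htX : t ∈ X
    · by_cases hsX : s ∈ X
      · have := hm.1 X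
        simp [htX, hsX]
        omega
      · -- X is not tight, since any tight set containing t contains s
        have hnt : ∑ v ∈ X, m v ≠ p X := by
          intro htight
          exact hsX (Tmin_subset p m htX htight hs)
        have := hm.1 X
        simp [htX, hsX]
        omega
    · have := hm.1 X
      by_cases hsX : s ∈ X <;> simp [htX, hsX] <;> omega
  · -- total sum unchanged
    have hne : s ≠ t := by intro h; rw [h] at hst; omega
    have hsum : ∑ v, (m v + (if v = s then 1 else 0) - (if v = t then 1 else 0))
        = ∑ v, m v + (if s ∈ Finset.univ then 1 else 0)
          - (if t ∈ Finset.univ then 1 else 0) := by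
      rw [Finset.sum_sub_distrib, Finset.sum_add_distrib]
      rw [Finset.sum_ite_eq' Finset.univ s (fun _ => (1 : ℤ)),
        Finset.sum_ite_eq' Finset.univ t (fun _ => (1 : ℤ))]
    rw [hsum]
    simp only [Finset.mem_univ, if_true]
    rw [hm.2]
    ring

end Tight

section Chain
variable [Fintype α] [DecidableEq α]

private def chainC (p : Finset α → ℤ) (m : α → ℤ) : ℕ → Finset α
  | 0 => ∅
  | i + 1 =>
      let Ci := chainC p m i
      if h : (Finset.univ \ Ci).Nonempty then
        Ci ∪ ((Finset.univ \ Ci).filter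
          (fun t => m t = ((Finset.univ \ Ci).image m).max' (h.image m))).biUnion (Tmin p m)
      else Ci

variable (p : Finset α → ℤ) (m : α → ℤ)

private lemma chainC_zero : chainC p m 0 = (∅ : Finset α) := rfl

private lemma chainC_succ_of_ne (i : ℕ) (hne : (Finset.univ \ chainC p m i).Nonempty) :
    chainC p m (i + 1) = chainC p m i ∪ ((Finset.univ \ chainC p m i).filter
      (fun t => m t = ((Finset.univ \ chainC p m i).image m).max' (hne.image m))).biUnion
        (Tmin p m) := by
  rw [chainC, dif_pos hne]

private lemma chainC_succ_of_univ (i : ℕ) (hu : chainC p m i = Finset.univ) :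
    chainC p m (i + 1) = chainC p m i := by
  rw [chainC, dif_neg]
  simp [hu]

private lemma chainC_subset_succ (i : ℕ) : chainC p m i ⊆ chainC p m (i + 1) := by
  by_cases hne : (Finset.univ \ chainC p m i).Nonempty
  · rw [chainC_succ_of_ne p m i hne]
    exact Finset.subset_union_left
  · rw [chainC]
    rw [dif_neg hne]

variable (hp : Supermodular p) (h0 : p ∅ = 0) (hm : m ∈ Bdot p)
  (hA : ¬ ∃ s t : α, m s + 2 ≤ m t ∧
      (fun v => m v + (if v = s then 1 else 0) - (if v = t then 1 else 0)) ∈ Bdot p)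

include hp h0 hm hA in
private lemma chainC_tight_top : ∀ i : ℕ,
    (∑ s ∈ chainC p m i, m s = p (chainC p m i)) ∧
    (∀ u ∈ chainC p m i, ∀ v, v ∉ chainC p m i → m v ≤ m u) := by
  intro i
  induction i with
  | zero =>
      constructor
      · simpa [chainC] using h0.symm
      · intro u hu
        simp [chainC] at hu
  | succ i ih =>
      by_cases hne : (Finset.univ \ chainC p m i).Nonempty
      · set Ci := chainC p m i with hCi
        set β : ℤ := ((Finset.univ \ Ci).image m).max' (hne.image m) with hβ
        set N : Finset α := (Finset.univ \ Ci).filter (fun t => m t = β) with hN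
        have hsucc : chainC p m (i + 1) = Ci ∪ N.biUnion (Tmin p m) :=
          chainC_succ_of_ne p m i hne
        -- witness of the max
        obtain ⟨t₀, ht₀mem, ht₀val⟩ : ∃ t₀ ∈ Finset.univ \ Ci, m t₀ = β := by
          have := Finset.max'_mem ((Finset.univ \ Ci).image m) (hne.image m)
          rw [Finset.mem_image] at this
          obtain ⟨t₀, h1, h2⟩ := this
          exact ⟨t₀, h1, h2⟩
        have ht₀N : t₀ ∈ N := by
          rw [hN, Finset.mem_filter]
          exact ⟨ht₀mem, ht₀val⟩
        have hout_le : ∀ v, v ∉ Ci → m v ≤ β := by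
          intro v hv
          exact Finset.le_max' _ _ (Finset.mem_image_of_mem m
            (Finset.mem_sdiff.2 ⟨Finset.mem_univ v, hv⟩))
        -- values of members of the new set
        have hval_lb : ∀ u ∈ chainC p m (i + 1), β - 1 ≤ m u := by
          intro u hu
          rw [hsucc, Finset.mem_union] at hu
          rcases hu with hu | hu
          · have := ih.2 u hu t₀ (Finset.mem_sdiff.1 ht₀mem).2
            omega
          · rw [Finset.mem_biUnion] at hu
            obtain ⟨t, htN, hut⟩ := hu
            have htval : m t = β := (Finset.mem_filter.1 htN).2
            have := Tmin_values p m hm hA hut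
            omega
        have hval_ub : ∀ v, v ∉ chainC p m (i + 1) → m v ≤ β - 1 := by
          intro v hv
          have hvCi : v ∉ Ci := fun h => hv (by rw [hsucc]; exact Finset.mem_union_left _ h)
          have h1 := hout_le v hvCi
          have h2 : m v ≠ β := by
            intro hvβ
            apply hv
            rw [hsucc]
            apply Finset.mem_union_right
            rw [Finset.mem_biUnion]
            refine ⟨v, ?_, mem_Tmin_self p m v⟩
            rw [hN, Finset.mem_filter]
            exact ⟨Finset.mem_sdiff.2 ⟨Finset.mem_univ v, hvCi⟩, hvβ⟩
          omega
        constructor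
        · -- tightness
          rw [hsucc]
          have haux : ∀ N' : Finset α,
              ∑ s ∈ Ci ∪ N'.biUnion (Tmin p m), m s = p (Ci ∪ N'.biUnion (Tmin p m)) := by
            intro N'
            induction N' using Finset.induction_on with
            | empty => simpa using ih.1
            | @insert a N'' ha ihN =>
                rw [Finset.biUnion_insert, ← Finset.union_assoc, Finset.union_comm Ci (Tmin p m a),
                  Finset.union_assoc]
                have := tight_inter_union p m hp hm (Tmin_tight p m hp hm a) ihN
                rw [Finset.union_comm]
                exact (tight_inter_union p m hp hm ihN (Tmin_tight p m hp hm a)).2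
          exact haux N
        · -- top property
          intro u hu v hv
          have h1 := hval_lb u hu
          have h2 := hval_ub v hv
          omega
      · rw [chainC, dif_neg hne]
        exact ih

include hp h0 hm hA in
private lemma chainC_nearuniform (i : ℕ) :
    ∀ u ∈ chainC p m (i + 1) \ chainC p m i, ∀ v ∈ chainC p m (i + 1) \ chainC p m i,
      m u ≤ m v + 1 := by
  by_cases hne : (Finset.univ \ chainC p m i).Nonempty
  · set Ci := chainC p m i with hCi
    set β : ℤ := ((Finset.univ \ Ci).image m).max' (hne.image m) with hβ
    set N : Finset α := (Finset.univ \ Ci).filter (fun t => m t = β) with hN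
    have hsucc : chainC p m (i + 1) = Ci ∪ N.biUnion (Tmin p m) :=
      chainC_succ_of_ne p m i hne
    intro u hu v hv
    rw [Finset.mem_sdiff] at hu hv
    have hu_ub : m u ≤ β :=
      Finset.le_max' _ _ (Finset.mem_image_of_mem m
        (Finset.mem_sdiff.2 ⟨Finset.mem_univ u, hu.2⟩))
    have hv_lb : β - 1 ≤ m v := by
      have := hv.1
      rw [hsucc, Finset.mem_union] at this
      rcases this with h | h
      · exact absurd h hv.2
      · rw [Finset.mem_biUnion] at h
        obtain ⟨t, htN, hvt⟩ := h
        have htval : m t = β := (Finset.mem_filter.1 htN).2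
        have := Tmin_values p m hm hA hvt
        omega
    omega
  · intro u hu
    rw [chainC, dif_neg hne] at hu
    rw [Finset.mem_sdiff] at hu
    exact absurd hu.1 hu.2

private lemma chainC_strict (i : ℕ) (hne : chainC p m i ≠ Finset.univ) :
    chainC p m i ⊂ chainC p m (i + 1) := by
  have hne' : (Finset.univ \ chainC p m i).Nonempty := by
    rw [Finset.sdiff_nonempty]
    intro h
    exact hne (Finset.univ_subset_iff.1 h)
  rw [chainC_succ_of_ne p m i hne']
  rw [Finset.ssubset_iff_of_subset Finset.subset_union_left]
  obtain ⟨t₀, ht₀mem, ht₀val⟩ : ∃ t₀ ∈ Finset.univ \ chainC p m i,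
      m t₀ = ((Finset.univ \ chainC p m i).image m).max' (hne'.image m) := by
    have := Finset.max'_mem ((Finset.univ \ chainC p m i).image m) (hne'.image m)
    rw [Finset.mem_image] at this
    obtain ⟨t₀, h1, h2⟩ := this
    exact ⟨t₀, h1, h2⟩
  refine ⟨t₀, ?_, (Finset.mem_sdiff.1 ht₀mem).2⟩
  apply Finset.mem_union_right
  rw [Finset.mem_biUnion]
  exact ⟨t₀, Finset.mem_filter.2 ⟨ht₀mem, ht₀val⟩, mem_Tmin_self p m t₀⟩

private lemma chainC_exists_univ : ∃ i : ℕ, chainC p m i = Finset.univ := by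
  have key : ∀ i : ℕ, chainC p m i = Finset.univ ∨ i ≤ (chainC p m i).card := by
    intro i
    induction i with
    | zero => right; exact Nat.zero_le _
    | succ i ih =>
        by_cases hu : chainC p m i = Finset.univ
        · left
          rw [chainC_succ_of_univ p m i hu, hu]
        · rcases ih with h | h
          · exact absurd h hu
          · right
            have := Finset.card_lt_card (chainC_strict p m i hu)
            omega
  rcases key (Fintype.card α) with h | h
  · exact ⟨_, h⟩
  · refine ⟨Fintype.card α, Finset.eq_univ_of_card _ ?_⟩
    have := Finset.card_le_univ (chainC p m (Fintype.card α))
    omega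


end Chain

section Pert
variable [Fintype α] [DecidableEq α] (m : α → ℤ) (s t : α) (hst : m s + 2 ≤ m t)

include hst in
private lemma pert_dec :
    Fcnt (fun v => m v + (if v = s then 1 else 0) - (if v = t then 1 else 0)) (m t) < Fcnt m (m t)
    ∧ ∀ θ', m t < θ' →
      Fcnt (fun v => m v + (if v = s then 1 else 0) - (if v = t then 1 else 0)) θ' = Fcnt m θ' := by
  constructor
  · have hset : Finset.univ.filter
        (fun v => m t ≤ m v + (if v = s then 1 else 0) - (if v = t then 1 else 0))
        = (Finset.univ.filter (fun v => m t ≤ m v)).erase t := by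
      ext v
      by_cases hvs : v = s
      · subst hvs
        have hvt : v ≠ t := by intro h; rw [h] at hst; omega
        simp [hvt]
        try omega
      · by_cases hvt : v = t
        · subst hvt
          simp [hvs]
          try omega
        · simp [hvs, hvt]
    rw [Fcnt, Fcnt, hset, Finset.card_erase_of_mem (by simp)]
    have : 0 < (Finset.univ.filter (fun v => m t ≤ m v)).card :=
      Finset.card_pos.2 ⟨t, by simp⟩
    omega
  · intro θ' hθ'
    rw [Fcnt, Fcnt]
    congr 1
    ext v
    by_cases hvs : v = s
    · subst hvs
      have hvt : v ≠ t := by intro h; rw [h] at hst; omega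
      simp [hvt]
      try omega
    · by_cases hvt : v = t
      · subst hvt
        simp [hvs]
        try omega
      · simp [hvs, hvt]

include hst in
private lemma pert_inc :
    Fcnt m (m s + 1) < Fcnt (fun v => m v + (if v = s then 1 else 0) - (if v = t then 1 else 0))
      (m s + 1)
    ∧ ∀ θ', θ' < m s + 1 →
      Fcnt m θ' = Fcnt (fun v => m v + (if v = s then 1 else 0) - (if v = t then 1 else 0)) θ' := by
  constructor
  · have hset : Finset.univ.filter
        (fun v => m s + 1 ≤ m v + (if v = s then 1 else 0) - (if v = t then 1 else 0))
        = insert s (Finset.univ.filter (fun v => m s + 1 ≤ m v)) := by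
      ext v
      by_cases hvs : v = s
      · subst hvs
        have hvt : v ≠ t := by intro h; rw [h] at hst; omega
        simp [hvt]
      · by_cases hvt : v = t
        · subst hvt
          simp [hvs]
          try omega
        · simp [hvs, hvt]
    rw [Fcnt, Fcnt, hset, Finset.card_insert_of_notMem (by simp)]
    omega
  · intro θ' hθ'
    rw [Fcnt, Fcnt]
    congr 1
    ext v
    by_cases hvs : v = s
    · subst hvs
      have hvt : v ≠ t := by intro h; rw [h] at hst; omega
      simp [hvt]
      try omega
    · by_cases hvt : v = t
      · subst hvt
        simp [hvs]
        try omega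
      · simp [hvs, hvt]

end Pert

/-- Theorem (equivalence of local and global decreasing minimality):
(A) no 1-tightening step exists for `m`;
(B) there is a chain of `m`-tight and `m`-top sets with near-uniform difference sets;
(C1) `m` is decreasingly minimal in `Ḃ(p)`;
(C2) `m` is increasingly maximal in `Ḃ(p)`. -/
theorem stmt0 [Fintype α] [DecidableEq α] [Nonempty α]
    (p : Finset α → ℤ) (hp : Supermodular p) (h0 : p ∅ = 0)
    (m : α → ℤ) (hm : m ∈ Bdot p) :
    List.TFAE
      [ -- (A): no 1-tightening step
        ¬ ∃ s t : α, m s + 2 ≤ m t ∧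
          (fun v => m v + (if v = s then 1 else 0) - (if v = t then 1 else 0)) ∈ Bdot p,
        -- (B): chain of m-tight, m-top sets with near-uniform difference sets
        ∃ (ℓ : ℕ) (C : ℕ → Finset α), 1 ≤ ℓ ∧ C 0 = ∅ ∧ C ℓ = Finset.univ ∧
          (∀ i, i < ℓ → C i ⊂ C (i + 1)) ∧
          (∀ i, 1 ≤ i → i ≤ ℓ →
            (∑ s ∈ C i, m s = p (C i)) ∧
            (∀ u ∈ C i, ∀ v, v ∉ C i → m v ≤ m u)) ∧
          (∀ i, i < ℓ → ∀ u ∈ C (i + 1) \ C i, ∀ v ∈ C (i + 1) \ C i, m u ≤ m v + 1),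
        -- (C1): m is decreasingly minimal
        ∀ y ∈ Bdot p, DecLE m y,
        -- (C2): m is increasingly maximal
        ∀ y ∈ Bdot p, IncLE y m ] := by
  tfae_have 1 → 2 := by
    intro hA
    have hexu := chainC_exists_univ p m
    refine ⟨Nat.find hexu, chainC p m, ?_, chainC_zero p m, Nat.find_spec hexu, ?_, ?_, ?_⟩
    · -- 1 ≤ ℓ
      rcases Nat.eq_zero_or_pos (Nat.find hexu) with h | h
      · exfalso
        have hu := Nat.find_spec hexu
        rw [h, chainC_zero] at hu
        have := Finset.univ_nonempty (α := α)
        rw [← hu] at this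
        exact Finset.not_nonempty_empty this
      · exact h
    · -- strict chain
      intro i hi
      exact chainC_strict p m i (Nat.find_min hexu hi)
    · -- tight and top
      intro i _ _
      exact chainC_tight_top p m hp h0 hm hA i
    · -- near-uniform differences
      intro i _
      exact chainC_nearuniform p m hp h0 hm hA i
  tfae_have 2 → 3 := by
    rintro ⟨ℓ, C, hℓ, hC0, hCl, hstrict, htt, hnu⟩ y hy
    by_contra hcon
    have hcon' : ¬ (sortedDesc m = sortedDesc y
        ∨ List.Lex (· < ·) (sortedDesc m) (sortedDesc y)) := hcon
    have hlex : List.Lex (· < ·) (sortedDesc y) (sortedDesc m) := by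
      rcases trichotomous_of (List.Lex ((· < ·) : ℤ → ℤ → Prop)) (sortedDesc m) (sortedDesc y)
        with h | h | h
      · exact absurd (Or.inr h) hcon'
      · exact absurd (Or.inl h) hcon'
      · exact h
    obtain ⟨θ, hθlt, hθeq⟩ := desc_lex_counts (sortedDesc_sorted y) (sortedDesc_sorted m) hlex
    rw [cntGe_sortedDesc, cntGe_sortedDesc] at hθlt
    have hFeq : ∀ θ', θ < θ' → Fcnt m θ' = Fcnt y θ' := by
      intro θ' h
      have := hθeq θ' h
      rw [cntGe_sortedDesc, cntGe_sortedDesc] at this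
      exact this.symm
    have hex : ∃ j, j ≤ ℓ ∧ Finset.univ.filter (fun s => θ ≤ m s) ⊆ C j :=
      ⟨ℓ, le_rfl, by rw [hCl]; exact Finset.subset_univ _⟩
    obtain ⟨hjℓ, hjsub⟩ := Nat.find_spec hex
    set j := Nat.find hex with hjdef
    have hj1 : 1 ≤ j := by
      rcases Nat.eq_zero_or_pos j with h | h
      · exfalso
        have hAne : (Finset.univ.filter (fun s => θ ≤ m s)).Nonempty := by
          rw [← Finset.card_pos]
          have : Fcnt y θ < Fcnt m θ := hθlt
          rw [Fcnt, Fcnt] at this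
          omega
        obtain ⟨a, ha⟩ := hAne
        have := hjsub ha
        rw [h, hC0] at this
        exact absurd this (Finset.notMem_empty a)
      · exact h
    have hnsub : ¬ Finset.univ.filter (fun s => θ ≤ m s) ⊆ C (j - 1) := by
      intro hsub
      exact Nat.find_min hex (by omega) ⟨by omega, hsub⟩
    obtain ⟨a, haA, haC⟩ := Finset.not_subset.1 hnsub
    have haθ : θ ≤ m a := (Finset.mem_filter.1 haA).2
    have hon : ∀ s ∈ C j, θ - 1 ≤ m s := by
      intro s hs
      by_cases hsC : s ∈ C (j - 1)
      · rcases Nat.eq_or_lt_of_le hj1 with h1 | h1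
        · exfalso
          have hj0 : j - 1 = 0 := by omega
          rw [hj0, hC0] at hsC
          exact absurd hsC (Finset.notMem_empty s)
        · have := (htt (j - 1) (by omega) (by omega)).2 s hsC a haC
          omega
      · have hjj : j - 1 + 1 = j := by omega
        have := hnu (j - 1) (by omega) a
          (by rw [hjj]; exact Finset.mem_sdiff.2 ⟨hjsub haA, haC⟩) s
          (by rw [hjj]; exact Finset.mem_sdiff.2 ⟨hs, hsC⟩)
        omega
    have hoff : ∀ s, s ∉ C j → m s ≤ θ - 1 := by
      intro s hs
      by_contra hcon2
      push_neg at hcon2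
      exact hs (hjsub (Finset.mem_filter.2 ⟨Finset.mem_univ s, by omega⟩))
    have hyD : ∑ s ∈ C j, m s ≤ ∑ s ∈ C j, y s := by
      rw [(htt j hj1 hjℓ).1]
      exact hy.1 (C j)
    exact sum_contra_dec m y (C j) θ hyD hon hoff hθlt hFeq
  tfae_have 2 → 4 := by
    rintro ⟨ℓ, C, hℓ, hC0, hCl, hstrict, htt, hnu⟩ y hy
    by_contra hcon
    have hcon' : ¬ (sortedAsc y = sortedAsc m
        ∨ List.Lex (· < ·) (sortedAsc y) (sortedAsc m)) := hcon
    have hlex : List.Lex (· < ·) (sortedAsc m) (sortedAsc y) := by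
      rcases trichotomous_of (List.Lex ((· < ·) : ℤ → ℤ → Prop)) (sortedAsc y) (sortedAsc m)
        with h | h | h
      · exact absurd (Or.inr h) hcon'
      · exact absurd (Or.inl h) hcon'
      · exact h
    obtain ⟨θ, hθlt, hθeq⟩ := asc_lex_counts (sortedAsc m) (sortedAsc y)
      (sortedAsc_sorted m) (sortedAsc_sorted y)
      (by rw [sortedAsc_length, sortedAsc_length]) hlex
    rw [cntGe_sortedAsc, cntGe_sortedAsc] at hθlt
    have hFeq : ∀ θ', θ' < θ → Fcnt m θ' = Fcnt y θ' := by
      intro θ' h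
      have := hθeq θ' h
      rw [cntGe_sortedAsc, cntGe_sortedAsc] at this
      exact this
    -- monotonicity of the chain
    have hmono : ∀ k, k ≤ ℓ → ∀ i, i ≤ k → C i ⊆ C k := by
      intro k
      induction k with
      | zero =>
          intro _ i hi
          have : i = 0 := Nat.le_zero.1 hi
          rw [this]
      | succ k ih =>
          intro hk i hi
          rcases Nat.eq_or_lt_of_le hi with h | h
          · rw [h]
          · exact ((ih (by omega) i (by omega)).trans (hstrict k (by omega)).subset)
    set A := Finset.univ.filter (fun s => θ ≤ m s) with hA
    set J := (Finset.range (ℓ + 1)).filter (fun j => C j ⊆ A) with hJ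
    have hJne : J.Nonempty := by
      use 0
      rw [hJ, Finset.mem_filter, Finset.mem_range]
      exact ⟨by omega, by rw [hC0]; exact Finset.empty_subset _⟩
    have hjmem := Finset.max'_mem J hJne
    set j := J.max' hJne with hjdef
    rw [hJ, Finset.mem_filter, Finset.mem_range] at hjmem
    obtain ⟨hjr, hjsub⟩ := hjmem
    have hjmax : ∀ k, k ≤ ℓ → C k ⊆ A → k ≤ j := by
      intro k hk hsub
      refine Finset.le_max' J k ?_
      rw [hJ, Finset.mem_filter, Finset.mem_range]
      exact ⟨by omega, hsub⟩
    have hon : ∀ s ∈ C j, θ ≤ m s := fun s hs => (Finset.mem_filter.1 (hjsub hs)).2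
    have hoff : ∀ s, s ∉ C j → m s ≤ θ := by
      intro s hs
      by_cases hsA : s ∈ A
      · have hsθ : θ ≤ m s := (Finset.mem_filter.1 hsA).2
        have hjl : j < ℓ := by
          rcases Nat.lt_or_ge j ℓ with h | h
          · exact h
          · exfalso
            have hje : j = ℓ := by omega
            apply hs
            rw [hje, hCl]
            exact Finset.mem_univ s
        have hex2 : ∃ k, k ≤ ℓ ∧ s ∈ C k := ⟨ℓ, le_rfl, by rw [hCl]; exact Finset.mem_univ s⟩
        obtain ⟨hkℓ, hsk⟩ := Nat.find_spec hex2
        set k := Nat.find hex2 with hkdef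
        have hsnot : ∀ k', k' < k → s ∉ C k' := by
          intro k' hk' h
          exact Nat.find_min hex2 hk' ⟨by omega, h⟩
        have hk0 : k ≠ 0 := by
          intro h
          have h2 := hsk
          rw [h, hC0] at h2
          exact absurd h2 (Finset.notMem_empty s)
        have hCk1A : C (k - 1) ⊆ A := by
          intro u hu
          rcases Nat.eq_zero_or_pos (k - 1) with h | h
          · rw [h, hC0] at hu
            exact absurd hu (Finset.notMem_empty u)
          · have hsk1 : s ∉ C (k - 1) := hsnot (k - 1) (by omega)
            have := (htt (k - 1) (by omega) (by omega)).2 u hu s hsk1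
            rw [hA]
            exact Finset.mem_filter.2 ⟨Finset.mem_univ u, by omega⟩
        have hk1j : k - 1 ≤ j := hjmax (k - 1) (by omega) hCk1A
        have hjk : j < k := by
          by_contra hcon3
          push_neg at hcon3
          exact hs (hmono j (by omega) k hcon3 hsk)
        have hkj : k = j + 1 := by omega
        have hnsub2 : ¬ C (j + 1) ⊆ A := by
          intro h
          have := hjmax (j + 1) (by omega) h
          omega
        obtain ⟨b, hbC, hbA⟩ := Finset.not_subset.1 hnsub2
        have hbj : b ∉ C j := fun h => hbA (hjsub h)
        have hbθ : m b ≤ θ - 1 := by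
          have : ¬ θ ≤ m b := fun h => hbA (by
            rw [hA]; exact Finset.mem_filter.2 ⟨Finset.mem_univ b, h⟩)
          omega
        have := hnu j hjl s
          (Finset.mem_sdiff.2 ⟨by rw [← hkj]; exact hsk, hs⟩) b
          (Finset.mem_sdiff.2 ⟨hbC, hbj⟩)
        omega
      · have : ¬ θ ≤ m s := fun h => hsA (by
          rw [hA]; exact Finset.mem_filter.2 ⟨Finset.mem_univ s, h⟩)
        omega
    have hje : ∑ s ∈ C j, m s ≤ ∑ s ∈ C j, y s := by
      rcases Nat.eq_zero_or_pos j with h | h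
      · rw [h, hC0]
        simp
      · rw [(htt j h (by omega)).1]
        exact hy.1 (C j)
    have hyD : ∑ s ∈ (C j)ᶜ, y s ≤ ∑ s ∈ (C j)ᶜ, m s := by
      have h1 := Finset.sum_compl_add_sum (C j) m
      have h2 := Finset.sum_compl_add_sum (C j) y
      have h3 : ∑ s, y s = ∑ s, m s := by rw [hy.2, hm.2]
      omega
    exact sum_contra_inc m y (C j) θ hyD hon hoff hθlt hFeq
  tfae_have 3 → 1 := by
    intro h3
    rintro ⟨s, t, hst, hmem⟩
    have hd : DecLE m (fun v => m v + (if v = s then 1 else 0) - (if v = t then 1 else 0)) :=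
      h3 _ hmem
    obtain ⟨hlt, heqa⟩ := pert_dec m s t hst
    have hlex : List.Lex (· < ·)
        (sortedDesc (fun v => m v + (if v = s then 1 else 0) - (if v = t then 1 else 0)))
        (sortedDesc m) := by
      apply desc_counts_lex _ _ (sortedDesc_sorted _) (sortedDesc_sorted _)
        (by rw [sortedDesc_length, sortedDesc_length])
      refine ⟨m t, ?_, ?_⟩
      · rw [cntGe_sortedDesc, cntGe_sortedDesc]
        exact hlt
      · intro θ' h
        rw [cntGe_sortedDesc, cntGe_sortedDesc]
        exact heqa θ' h
    rcases hd with he | hl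
    · rw [he] at hlex
      exact asymm hlex hlex
    · exact asymm hlex hl
  tfae_have 4 → 1 := by
    intro h4
    rintro ⟨s, t, hst, hmem⟩
    have hi : IncLE (fun v => m v + (if v = s then 1 else 0) - (if v = t then 1 else 0)) m :=
      h4 _ hmem
    obtain ⟨hlt, heqa⟩ := pert_inc m s t hst
    have hlex : List.Lex (· < ·) (sortedAsc m)
        (sortedAsc (fun v => m v + (if v = s then 1 else 0) - (if v = t then 1 else 0))) := by
      apply asc_counts_lex _ _ (sortedAsc_sorted _) (sortedAsc_sorted _)
        (by rw [sortedAsc_length, sortedAsc_length])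
      refine ⟨m s + 1, ?_, ?_⟩
      · rw [cntGe_sortedAsc, cntGe_sortedAsc]
        exact hlt
      · intro θ' h
        rw [cntGe_sortedAsc, cntGe_sortedAsc]
        exact heqa θ' h
    rcases hi with he | hl
    · rw [he] at hlex
      exact asymm hlex hlex
    · exact asymm hlex hl
  tfae_finish
end

section
/- Let p be an integer-valued supermodular set-function on the subsets of a nonempty finite set S with p(∅) = 0, and assume Ḃ(p) is nonempty. Then the smallest integer β for which some element m of Ḃ(p) satisfies m(s) ≤ β for every s ∈ S equals max{ ⌈p(X)/|X|⌉ : ∅ ≠ X ⊆ S }, where ⌈·⌉ denotes the ceiling of a rational number. -/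
open Finset

variable {α : Type*}

lemma exists_bounded [Fintype α] [DecidableEq α] (p : Finset α → ℤ) (hp : Supermodular p)
    (μ : ℤ) (hμ : ∀ X : Finset α, p X ≤ μ * X.card) :
    ∀ n : ℕ, ∀ m : α → ℤ, m ∈ Bdot p → (∑ a, (m a - μ).toNat) = n →
      ∃ m' ∈ Bdot p, ∀ s, m' s ≤ μ := by
  intro n
  induction n using Nat.strong_induction_on with
  | _ n ih =>
    intro m hm hΦ
    by_cases hall : ∀ s, m s ≤ μ
    · exact ⟨m, hm, hall⟩
    push_neg at hall
    obtain ⟨s, hs⟩ := hall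
    -- tight sets containing s
    have hinter : ∀ X Y : Finset α,
        (s ∈ X ∧ ∑ a ∈ X, m a = p X) → (s ∈ Y ∧ ∑ a ∈ Y, m a = p Y) →
        (s ∈ X ∩ Y ∧ ∑ a ∈ X ∩ Y, m a = p (X ∩ Y)) := by
      intro X Y ⟨hsX, hX⟩ ⟨hsY, hY⟩
      refine ⟨mem_inter.2 ⟨hsX, hsY⟩, ?_⟩
      have h1 := hm.1 (X ∩ Y)
      have h2 := hm.1 (X ∪ Y)
      have h3 : ∑ a ∈ X ∪ Y, m a + ∑ a ∈ X ∩ Y, m a = ∑ a ∈ X, m a + ∑ a ∈ Y, m a :=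
        Finset.sum_union_inter
      have h4 := hp X Y
      omega
    set 𝒯 : Finset (Finset α) :=
      univ.filter (fun X : Finset α => s ∈ X ∧ ∑ a ∈ X, m a = p X) with h𝒯def
    have h𝒯 : 𝒯.Nonempty := by
      refine ⟨univ, ?_⟩
      simp only [h𝒯def, mem_filter, mem_univ, true_and]
      exact hm.2
    set T : Finset α := 𝒯.inf' h𝒯 id with hTdef
    have hT : s ∈ T ∧ ∑ a ∈ T, m a = p T := by
      refine Finset.inf'_induction h𝒯 id (p := fun Z => s ∈ Z ∧ ∑ a ∈ Z, m a = p Z)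
        (fun A hA B hB => hinter A B hA hB) ?_
      intro X hX
      simp only [h𝒯def, mem_filter, mem_univ, true_and] at hX
      exact hX
    have hTsub : ∀ X : Finset α, s ∈ X → ∑ a ∈ X, m a = p X → T ⊆ X := by
      intro X h1 h2
      have hX𝒯 : X ∈ 𝒯 := by
        simp only [h𝒯def, mem_filter, mem_univ, true_and]
        exact ⟨h1, h2⟩
      exact Finset.inf'_le id hX𝒯
    -- find t ∈ T with m t < μ
    have ht : ∃ t ∈ T, m t < μ := by
      by_contra hcon
      push_neg at hcon
      have h1 : p T ≤ μ * T.card := hμ T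
      have h2 : ∑ a ∈ T, m a = p T := hT.2
      have h3 : ∑ a ∈ T.erase s, m a + m s = ∑ a ∈ T, m a := Finset.sum_erase_add T m hT.1
      have h6 : 1 ≤ T.card := card_pos.2 ⟨s, hT.1⟩
      have h4 : (T.erase s).card • μ ≤ ∑ a ∈ T.erase s, m a :=
        Finset.card_nsmul_le_sum _ _ _ (fun t ht' => hcon t (mem_of_mem_erase ht'))
      have h5 : (T.erase s).card = T.card - 1 := card_erase_of_mem hT.1
      rw [h5, nsmul_eq_mul, Nat.cast_sub h6, Nat.cast_one] at h4
      nlinarith [h4, h1, h2, h3, hs]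
    obtain ⟨t, htT, htμ⟩ := ht
    have hts : t ≠ s := by intro h; rw [h] at htμ; omega
    set m' : α → ℤ := fun a => m a + (if a = t then 1 else 0) - (if a = s then 1 else 0)
      with hm'def
    have hsum' : ∀ X : Finset α, ∑ a ∈ X, m' a =
        ∑ a ∈ X, m a + (if t ∈ X then 1 else 0) - (if s ∈ X then 1 else 0) := by
      intro X
      simp only [hm'def]
      rw [Finset.sum_sub_distrib, Finset.sum_add_distrib,
        Finset.sum_ite_eq' X t (fun _ => (1 : ℤ)), Finset.sum_ite_eq' X s (fun _ => (1 : ℤ))]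
    have hm' : m' ∈ Bdot p := by
      constructor
      · intro X
        rw [hsum' X]
        by_cases hsX : s ∈ X
        · by_cases htX : t ∈ X
          · have := hm.1 X; simp only [hsX, htX, if_true]; omega
          · have hnt : ∑ a ∈ X, m a ≠ p X := by
              intro hXt
              exact htX (hTsub X hsX hXt htT)
            have := hm.1 X
            simp only [hsX, htX, if_true, if_false]
            omega
        · have := hm.1 X
          by_cases htX : t ∈ X <;> simp only [hsX, htX, if_true, if_false] <;> omega
      · rw [hsum' univ]
        simp only [mem_univ, if_true]
        have := hm.2
        omega
    have hΦ' : ∑ a, (m' a - μ).toNat < n := by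
      rw [← hΦ]
      apply Finset.sum_lt_sum
      · intro i _
        simp only [hm'def]
        rcases eq_or_ne i t with rfl | h1
        · rw [if_pos rfl]
          rcases eq_or_ne i s with rfl | h2
          · exact absurd rfl hts
          · rw [if_neg h2]; omega
        · rw [if_neg h1]
          rcases eq_or_ne i s with rfl | h2
          · rw [if_pos rfl]; omega
          · rw [if_neg h2]; omega
      · refine ⟨s, mem_univ s, ?_⟩
        have h1 : m' s = m s - 1 := by
          simp only [hm'def]
          rw [if_neg (Ne.symm hts)]
          simp
        simp only [h1]
        omega
    exact ih _ hΦ' m' hm' rfl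

/-- The smallest integer `β` covering some element of `Ḃ(p)` equals
`max{ ⌈p(X)/|X|⌉ : ∅ ≠ X ⊆ S }`. -/
theorem stmt2 [Fintype α] [DecidableEq α] [Nonempty α]
    (p : Finset α → ℤ) (hp : Supermodular p) (h0 : p ∅ = 0)
    (hne : (Bdot p).Nonempty) (β : ℤ)
    (hβ : IsLeast {b : ℤ | ∃ m ∈ Bdot p, ∀ s : α, m s ≤ b} β) :
    IsGreatest {z : ℤ | ∃ X : Finset α, X.Nonempty ∧
      z = ⌈(p X : ℚ) / (X.card : ℚ)⌉} β := by
  set f : Finset α → ℤ := fun X => ⌈(p X : ℚ) / (X.card : ℚ)⌉ with hfdef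
  set F : Finset (Finset α) := univ.filter (fun X => X.Nonempty) with hFdef
  have hF : F.Nonempty := ⟨univ, by simp [hFdef, Finset.univ_nonempty]⟩
  set μ : ℤ := F.sup' hF f with hμdef
  -- every X satisfies p X ≤ μ * |X|
  have hμ : ∀ X : Finset α, p X ≤ μ * X.card := by
    intro X
    rcases X.eq_empty_or_nonempty with rfl | hXne
    · simp [h0]
    · have h1 : f X ≤ μ := le_sup' f (mem_filter.2 ⟨mem_univ _, hXne⟩)
      have h2 : (p X : ℚ) / (X.card : ℚ) ≤ f X := Int.le_ceil _
      have hc : (0 : ℚ) < (X.card : ℚ) := by exact_mod_cast card_pos.2 hXne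
      rw [div_le_iff₀ hc] at h2
      have h3 : (p X : ℚ) ≤ (μ : ℚ) * (X.card : ℚ) := by
        calc (p X : ℚ) ≤ (f X : ℚ) * (X.card : ℚ) := h2
          _ ≤ (μ : ℚ) * (X.card : ℚ) := by
            apply mul_le_mul_of_nonneg_right _ hc.le
            exact_mod_cast h1
      exact_mod_cast h3
  -- upper-bound direction
  have hub : ∀ z ∈ {z : ℤ | ∃ X : Finset α, X.Nonempty ∧
      z = ⌈(p X : ℚ) / (X.card : ℚ)⌉}, z ≤ β := by
    rintro z ⟨X, hXne, rfl⟩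
    obtain ⟨m, hm, hmb⟩ := hβ.1
    have h1 : p X ≤ β * X.card := by
      calc p X ≤ ∑ a ∈ X, m a := hm.1 X
        _ ≤ ∑ _a ∈ X, β := Finset.sum_le_sum fun a _ => hmb a
        _ = β * X.card := by rw [Finset.sum_const, nsmul_eq_mul]; ring
    have hc : (0 : ℚ) < (X.card : ℚ) := by exact_mod_cast card_pos.2 hXne
    rw [Int.ceil_le, div_le_iff₀ hc]
    exact_mod_cast h1
  have hμβ : μ ≤ β :=
    Finset.sup'_le hF f fun X hX => hub (f X) ⟨X, (mem_filter.1 hX).2, rfl⟩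
  have hβμ : β ≤ μ := by
    obtain ⟨m0, hm0⟩ := hne
    obtain ⟨m, hm, hb⟩ := exists_bounded p hp μ hμ _ m0 hm0 rfl
    exact hβ.2 ⟨m, hm, hb⟩
  have hβeq : β = μ := le_antisymm hβμ hμβ
  constructor
  · obtain ⟨X, hX, hXeq⟩ := Finset.exists_mem_eq_sup' hF f
    exact ⟨X, (mem_filter.1 hX).2, by rw [hβeq, hμdef, hXeq]⟩
  · exact hub
end

section
/- Let p be an integer-valued supermodular set-function on the subsets of a nonempty finite set S with p(∅) = 0, and assume Ḃ(p) is nonempty. Then the minimum, over all β₁-covered elements m of Ḃ(p), of the number |{s ∈ S : m(s) = β₁}| of β₁-valued components of m equals max{ p(X) − (β₁ − 1)·|X| : X ⊆ S }. -/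
open Finset

variable {α : Type*}

/-- `m` is `β`-covered: every component is at most `β`. -/
def IsCovered [Fintype α] (β : ℤ) (m : α → ℤ) : Prop := ∀ s : α, m s ≤ β

/-- `m` is a pre-dec-min element of `Ḃ(p)` (with respect to the bound `β`):
it is a `β`-covered element of `Ḃ(p)` with a minimum number of `β`-valued
components among all `β`-covered elements of `Ḃ(p)`. -/
def PreDecMin [Fintype α] [DecidableEq α] (p : Finset α → ℤ) (β : ℤ) (m : α → ℤ) : Prop :=
  m ∈ Bdot p ∧ IsCovered β m ∧
    ∀ m' ∈ Bdot p, IsCovered β m' →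
      (Finset.univ.filter (fun s => m s = β)).card ≤
        (Finset.univ.filter (fun s => m' s = β)).card

/-- `S₁(m)`: the intersection of all `m`-tight sets containing every `β`-valued element. -/
def S1m [Fintype α] (p : Finset α → ℤ) (β : ℤ) (m : α → ℤ) : Set α :=
  {s | ∀ X : Finset α, (∑ v ∈ X, m v = p X) → (∀ t : α, m t = β → t ∈ X) → s ∈ X}

/-- Min-max: the minimum number of `β₁`-valued components of a `β₁`-covered element
of `Ḃ(p)` equals `max{ p(X) − (β₁ − 1)·|X| : X ⊆ S }`. -/
theorem stmt4 [Fintype α] [DecidableEq α] [Nonempty α]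
    (p : Finset α → ℤ) (hp : Supermodular p) (h0 : p ∅ = 0)
    (hne : (Bdot p).Nonempty) (β₁ : ℤ)
    (hβ : IsLeast {b : ℤ | ∃ m ∈ Bdot p, ∀ s : α, m s ≤ b} β₁) :
    ∃ r : ℤ,
      IsLeast {z : ℤ | ∃ m ∈ Bdot p, IsCovered β₁ m ∧
        z = ((Finset.univ.filter (fun s => m s = β₁)).card : ℤ)} r ∧
      IsGreatest {z : ℤ | ∃ X : Finset α, z = p X - (β₁ - 1) * X.card} r := by
  classical
  -- The set of counts
  set Z : Set ℤ := {z : ℤ | ∃ m ∈ Bdot p, IsCovered β₁ m ∧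
        z = ((Finset.univ.filter (fun s => m s = β₁)).card : ℤ)} with hZdef
  have hZne : ∃ z : ℤ, z ∈ Z := by
    obtain ⟨m, hm, hcov⟩ := hβ.1
    exact ⟨_, m, hm, hcov, rfl⟩
  have hZbdd : ∃ b : ℤ, ∀ z : ℤ, z ∈ Z → b ≤ z := by
    refine ⟨0, ?_⟩; rintro z ⟨m, _, _, rfl⟩; positivity
  obtain ⟨r, hrZ, hrmin⟩ := Int.exists_least_of_bdd hZbdd hZne
  obtain ⟨m, hm, hcov, hrm⟩ := hrZ
  have hm1 : ∀ X : Finset α, p X ≤ ∑ s ∈ X, m s := hm.1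
  have hm2 : (∑ s, m s) = p Finset.univ := hm.2
  set F : Finset α := Finset.univ.filter (fun s => m s = β₁) with hFdef
  have hmemF : ∀ v : α, v ∈ F ↔ m v = β₁ := by
    intro v; simp [hFdef]
  -- weak duality
  have weak : ∀ X : Finset α, p X - (β₁ - 1) * X.card ≤ (F.card : ℤ) := by
    intro X
    have h1 : p X ≤ ∑ s ∈ X, m s := hm1 X
    have h2 : ∑ s ∈ X, m s ≤ ∑ s ∈ X, ((β₁ - 1) + (if m s = β₁ then 1 else 0)) := by
      apply Finset.sum_le_sum
      intro s _
      by_cases h : m s = β₁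
      · simp [h]
      · have := hcov s; simp [h]; omega
    have h3 : ∑ s ∈ X, ((β₁ - 1) + (if m s = β₁ then (1:ℤ) else 0))
        = (β₁ - 1) * X.card + ((X.filter (fun s => m s = β₁)).card : ℤ) := by
      rw [Finset.sum_add_distrib, Finset.sum_const, Finset.sum_boole, nsmul_eq_mul]
      ring
    have h4 : (X.filter (fun s => m s = β₁)).card ≤ F.card := by
      apply Finset.card_le_card
      intro v hv
      rw [Finset.mem_filter] at hv
      exact (hmemF v).2 hv.2
    have h4' : ((X.filter (fun s => m s = β₁)).card : ℤ) ≤ (F.card : ℤ) := by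
      exact_mod_cast h4
    omega
  -- F is nonempty
  have hFne : F.Nonempty := by
    rw [Finset.nonempty_iff_ne_empty]
    intro hF
    have hb : β₁ - 1 ∈ {b : ℤ | ∃ m ∈ Bdot p, ∀ s : α, m s ≤ b} := by
      refine ⟨m, hm, fun s => ?_⟩
      have h1 : m s ≠ β₁ := by
        intro h
        have : s ∈ F := (hmemF s).2 h
        simp [hF] at this
      have := hcov s; omega
    have := hβ.2 hb
    omega
  -- tight sets are closed under intersection and union
  have tight_inter : ∀ Y Y' : Finset α, (∑ v ∈ Y, m v = p Y) → (∑ v ∈ Y', m v = p Y') →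
      (∑ v ∈ Y ∩ Y', m v = p (Y ∩ Y')) := by
    intro Y Y' hY hY'
    have h1 := hp Y Y'
    have h2 := hm1 (Y ∩ Y')
    have h3 := hm1 (Y ∪ Y')
    have h4 : (∑ v ∈ Y ∪ Y', m v) + ∑ v ∈ Y ∩ Y', m v = (∑ v ∈ Y, m v) + ∑ v ∈ Y', m v :=
      Finset.sum_union_inter
    omega
  have tight_union : ∀ Y Y' : Finset α, (∑ v ∈ Y, m v = p Y) → (∑ v ∈ Y', m v = p Y') →
      (∑ v ∈ Y ∪ Y', m v = p (Y ∪ Y')) := by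
    intro Y Y' hY hY'
    have h1 := hp Y Y'
    have h2 := hm1 (Y ∩ Y')
    have h3 := hm1 (Y ∪ Y')
    have h4 : (∑ v ∈ Y ∪ Y', m v) + ∑ v ∈ Y ∩ Y', m v = (∑ v ∈ Y, m v) + ∑ v ∈ Y', m v :=
      Finset.sum_union_inter
    omega
  -- the family of tight sets containing F
  set T : Finset (Finset α) :=
    Finset.univ.filter (fun Y => (∑ v ∈ Y, m v = p Y) ∧ F ⊆ Y) with hTdef
  have hmemT : ∀ Y : Finset α, Y ∈ T ↔ (∑ v ∈ Y, m v = p Y) ∧ F ⊆ Y := by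
    intro Y; simp [hTdef]
  have hTne : T.Nonempty := by
    refine ⟨Finset.univ, (hmemT _).2 ⟨hm2, Finset.subset_univ _⟩⟩
  obtain ⟨X₀, hX₀T, hX₀min⟩ := Finset.exists_min_image T Finset.card hTne
  obtain ⟨hX₀tight, hFX₀⟩ := (hmemT X₀).1 hX₀T
  -- X₀ is the smallest tight set containing F
  have hsmall : ∀ Y : Finset α, (∑ v ∈ Y, m v = p Y) → F ⊆ Y → X₀ ⊆ Y := by
    intro Y hY hFY
    have hmem : X₀ ∩ Y ∈ T := by
      refine (hmemT _).2 ⟨tight_inter _ _ hX₀tight hY, Finset.subset_inter hFX₀ hFY⟩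
    have hcard := hX₀min _ hmem
    have heq : X₀ ∩ Y = X₀ :=
      Finset.eq_of_subset_of_card_le Finset.inter_subset_left hcard
    intro v hv
    rw [← heq] at hv
    exact (Finset.mem_inter.1 hv).2
  -- key claim: every element of X₀ has value ≥ β₁ - 1
  have key : ∀ t ∈ X₀, β₁ - 1 ≤ m t := by
    intro t ht
    by_contra hlt
    push_neg at hlt
    have htval : m t ≤ β₁ - 2 := by omega
    -- find s ∈ F such that every tight set containing s contains t
    have hexs : ∃ s ∈ F, ∀ Y : Finset α, (∑ v ∈ Y, m v = p Y) → s ∈ Y → t ∈ Y := by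
      by_contra hc
      push_neg at hc
      choose! Y hY1 hY2 hY3 using hc
      set U : Finset α := F.sup Y with hUdef
      have hUtight : ∑ v ∈ U, m v = p U := by
        refine Finset.sup_induction (p := fun W => ∑ v ∈ W, m v = p W) ?_
          (fun a ha b hb => tight_union a b ha hb) (fun b hb => hY1 b hb)
        show ∑ v ∈ (∅ : Finset α), m v = p ∅
        simpa using h0.symm
      have hFU : F ⊆ U := by
        intro v hv
        exact Finset.le_sup (f := Y) hv (hY2 v hv)
      have htU : t ∈ U := hsmall U hUtight hFU ht
      rw [hUdef, Finset.mem_sup] at htU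
      obtain ⟨v, hv, htv⟩ := htU
      exact hY3 v hv htv
    obtain ⟨s, hsF, hsprop⟩ := hexs
    have hsval : m s = β₁ := (hmemF s).1 hsF
    have hst : s ≠ t := by intro h; rw [h] at hsval; omega
    have hts : t ≠ s := fun h => hst h.symm
    -- the exchanged vector
    set m' : α → ℤ := fun v => m v + (if v = t then 1 else 0) - (if v = s then 1 else 0)
      with hm'def
    have hsum : ∀ Y : Finset α, ∑ v ∈ Y, m' v =
        (∑ v ∈ Y, m v) + (if t ∈ Y then 1 else 0) - (if s ∈ Y then 1 else 0) := by
      intro Y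
      simp only [hm'def]
      rw [Finset.sum_sub_distrib, Finset.sum_add_distrib,
        Finset.sum_ite_eq' Y t (fun _ => (1:ℤ)), Finset.sum_ite_eq' Y s (fun _ => (1:ℤ))]
    have hm' : m' ∈ Bdot p := by
      constructor
      · intro Y
        rw [hsum Y]
        have h1 := hm1 Y
        by_cases hsY : s ∈ Y
        · by_cases htY : t ∈ Y
          · simp [hsY, htY]; omega
          · have hnt : ∑ v ∈ Y, m v ≠ p Y := by
              intro h; exact htY (hsprop Y h hsY)
            simp [hsY, htY]; omega
        · by_cases htY : t ∈ Y <;> simp [hsY, htY] <;> omega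
      · rw [hsum Finset.univ]
        simp [hm2]
    have hcov' : IsCovered β₁ m' := by
      intro v
      simp only [hm'def]
      by_cases hvt : v = t
      · simp [hvt, hts]; omega
      · by_cases hvs : v = s
        · simp [hvs, hst, hsval]
        · simp [hvt, hvs]; exact hcov v
    -- the count strictly decreases
    set F' : Finset α := Finset.univ.filter (fun v => m' v = β₁) with hF'def
    have hF'sub : F' ⊆ F.erase s := by
      intro v hv
      rw [hF'def, Finset.mem_filter] at hv
      have hv2 := hv.2
      simp only [hm'def] at hv2
      by_cases hvt : v = t
      · simp [hvt, hts] at hv2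
        omega
      · by_cases hvs : v = s
        · simp [hvs, hst] at hv2
          omega
        · simp [hvt, hvs] at hv2
          rw [Finset.mem_erase]
          exact ⟨hvs, (hmemF v).2 hv2⟩
    have hcard' : F'.card < F.card := by
      calc F'.card ≤ (F.erase s).card := Finset.card_le_card hF'sub
        _ < F.card := Finset.card_erase_lt_of_mem hsF
    have hmem' : ((F'.card : ℤ)) ∈ Z := ⟨m', hm', hcov', rfl⟩
    have := hrmin _ hmem'
    rw [hrm] at this
    exact absurd this (by exact_mod_cast Nat.not_le.2 hcard')
  -- compute p X₀
  have hfilter : X₀.filter (fun v => m v = β₁) = F := by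
    ext v
    rw [Finset.mem_filter, hmemF]
    constructor
    · exact fun h => h.2
    · exact fun h => ⟨hFX₀ ((hmemF v).2 h), h⟩
  have hsumX₀ : ∑ v ∈ X₀, m v = ∑ v ∈ X₀, ((β₁ - 1) + (if m v = β₁ then 1 else 0)) := by
    apply Finset.sum_congr rfl
    intro v hv
    have h1 := key v hv
    have h2 := hcov v
    by_cases h : m v = β₁
    · simp [h]
    · simp [h]; omega
  have hval : p X₀ = (β₁ - 1) * X₀.card + (F.card : ℤ) := by
    rw [← hX₀tight, hsumX₀, Finset.sum_add_distrib, Finset.sum_const, Finset.sum_boole,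
      nsmul_eq_mul, hfilter]
    ring
  refine ⟨r, ⟨⟨m, hm, hcov, hrm⟩, fun z hz => hrmin z hz⟩, ⟨X₀, ?_⟩, ?_⟩
  · rw [hval, hrm]; ring
  · rintro z ⟨X, rfl⟩
    rw [hrm]
    have := weak X
    omega
end

section
/- Let p be an integer-valued supermodular set-function on the subsets of a nonempty finite set S with p(∅) = 0, and assume Ḃ(p) is nonempty. Then the peak set S₁ (the intersection of all subsets of S maximizing h₁) is itself a maximizer of h₁, and for every pre-dec-min element m of Ḃ(p) one has S₁(m) = S₁. In particular, S₁(m) is the same for every pre-dec-min element m of Ḃ(p). -/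
open Finset

variable {α : Type*}

section Aux

variable [Fintype α] [DecidableEq α]

/-- Tight sets of an element of `Ḃ(p)` are closed under intersection and union. -/
lemma tight_lattice {p : Finset α → ℤ} (hp : Supermodular p) {m : α → ℤ}
    (hm : m ∈ Bdot p) {X Y : Finset α}
    (hX : ∑ v ∈ X, m v = p X) (hY : ∑ v ∈ Y, m v = p Y) :
    (∑ v ∈ X ∩ Y, m v = p (X ∩ Y)) ∧ (∑ v ∈ X ∪ Y, m v = p (X ∪ Y)) := by
  have h1 := hp X Y
  have h2 := hm.1 (X ∩ Y)
  have h3 := hm.1 (X ∪ Y)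
  have h4 : (∑ v ∈ X ∪ Y, m v) + (∑ v ∈ X ∩ Y, m v)
      = (∑ v ∈ X, m v) + (∑ v ∈ Y, m v) := Finset.sum_union_inter
  constructor <;> linarith

/-- The intersection of two maximizers of `X ↦ p X - c·|X|` is again a maximizer. -/
lemma maximizer_inter {p : Finset α → ℤ} (hp : Supermodular p) (c : ℤ) {X Y : Finset α}
    (hX : ∀ Z : Finset α, p Z - c * Z.card ≤ p X - c * X.card)
    (hY : ∀ Z : Finset α, p Z - c * Z.card ≤ p Y - c * Y.card) :
    ∀ Z : Finset α, p Z - c * Z.card ≤ p (X ∩ Y) - c * (X ∩ Y).card := by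
  intro Z
  have h1 := hp X Y
  have h2 : ((X ∩ Y).card : ℤ) + ((X ∪ Y).card : ℤ) = (X.card : ℤ) + (Y.card : ℤ) := by
    exact_mod_cast Finset.card_inter_add_card_union X Y
  have h2' : c * ((X ∩ Y).card : ℤ) + c * ((X ∪ Y).card : ℤ)
      = c * (X.card : ℤ) + c * (Y.card : ℤ) := by linear_combination c * h2
  have h3 := hX (X ∪ Y)
  have h4 := hY Z
  linarith

/-- A nonempty intersection-closed family of finsets has a least element. -/
lemma exists_least_of_inter_closed {F : Finset (Finset α)} (hne : F.Nonempty)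
    (hc : ∀ X ∈ F, ∀ Y ∈ F, X ∩ Y ∈ F) : ∃ W ∈ F, ∀ X ∈ F, W ⊆ X := by
  obtain ⟨W, hW, hWmin⟩ := F.exists_min_image (fun X => X.card) hne
  refine ⟨W, hW, fun X hX => ?_⟩
  have h1 : W ∩ X ∈ F := hc W hW X hX
  have h2 : W ∩ X = W :=
    Finset.eq_of_subset_of_card_le (Finset.inter_subset_left) (hWmin _ h1)
  rw [← h2]
  exact Finset.inter_subset_right

/-- A nonempty union-closed family of finsets has a greatest element. -/
lemma exists_greatest_of_union_closed {F : Finset (Finset α)} (hne : F.Nonempty)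
    (hc : ∀ X ∈ F, ∀ Y ∈ F, X ∪ Y ∈ F) : ∃ Z ∈ F, ∀ X ∈ F, X ⊆ Z := by
  obtain ⟨Z, hZ, hZmax⟩ := F.exists_max_image (fun X => X.card) hne
  refine ⟨Z, hZ, fun X hX => ?_⟩
  have h1 : X ∪ Z ∈ F := hc X hX Z hZ
  have h2 : X ∪ Z = Z :=
    (Finset.eq_of_subset_of_card_le Finset.subset_union_right (hZmax _ h1)).symm
  rw [← h2]
  exact Finset.subset_union_left

/-- Shift a sum by a constant per element. -/
lemma sum_shift (m : α → ℤ) (c : ℤ) (Y : Finset α) :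
    (∑ v ∈ Y, m v) - c * Y.card = ∑ v ∈ Y, (m v - c) := by
  rw [Finset.sum_sub_distrib, Finset.sum_const, nsmul_eq_mul]
  ring

end Aux

/-- The peak set `S₁` (the intersection of all maximizers of
`h₁(X) = p(X) − (β₁ − 1)·|X|`) is itself a maximizer of `h₁`, and
`S₁(m) = S₁` for every pre-dec-min element `m` of `Ḃ(p)`. -/
theorem stmt5 [Fintype α] [DecidableEq α] [Nonempty α]
    (p : Finset α → ℤ) (hp : Supermodular p) (h0 : p ∅ = 0)
    (hne : (Bdot p).Nonempty) (β₁ : ℤ)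
    (hβ : IsLeast {b : ℤ | ∃ m ∈ Bdot p, ∀ s : α, m s ≤ b} β₁)
    (S₁ : Finset α)
    (hS₁ : ∀ s : α, s ∈ S₁ ↔ ∀ X : Finset α,
      (∀ Y : Finset α, p Y - (β₁ - 1) * Y.card ≤ p X - (β₁ - 1) * X.card) → s ∈ X) :
    (∀ Y : Finset α, p Y - (β₁ - 1) * Y.card ≤ p S₁ - (β₁ - 1) * S₁.card) ∧
    (∀ m : α → ℤ, PreDecMin p β₁ m → S1m p β₁ m = ↑S₁) := by
  classical
  -- abbreviation for "X is a maximizer of h₁"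
  set IsMax : Finset α → Prop :=
    fun X => ∀ Y : Finset α, p Y - (β₁ - 1) * Y.card ≤ p X - (β₁ - 1) * X.card with hIsMax
  -- a maximizer exists
  obtain ⟨X₀, -, hX₀⟩ := Finset.exists_max_image (univ : Finset (Finset α))
    (fun X => p X - (β₁ - 1) * X.card) ⟨∅, Finset.mem_univ _⟩
  have hX₀' : IsMax X₀ := fun Y => hX₀ Y (Finset.mem_univ _)
  -- the family of maximizers, as a finset
  set F : Finset (Finset α) := (univ : Finset (Finset α)).filter IsMax with hF
  have hFmem : ∀ X : Finset α, X ∈ F ↔ IsMax X := by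
    intro X; simp [hF]
  have hFne : F.Nonempty := ⟨X₀, (hFmem X₀).2 hX₀'⟩
  have hFclosed : ∀ X ∈ F, ∀ Y ∈ F, X ∩ Y ∈ F := by
    intro X hX Y hY
    exact (hFmem _).2 (maximizer_inter hp (β₁ - 1) ((hFmem X).1 hX) ((hFmem Y).1 hY))
  obtain ⟨W₀, hW₀F, hW₀min⟩ := exists_least_of_inter_closed hFne hFclosed
  have hW₀max : IsMax W₀ := (hFmem W₀).1 hW₀F
  -- `S₁ = W₀`
  have hS₁W₀ : S₁ = W₀ := by
    ext s
    rw [hS₁ s]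
    constructor
    · intro h; exact h W₀ hW₀max
    · intro h X hX
      exact hW₀min X ((hFmem X).2 hX) h
  refine ⟨hS₁W₀ ▸ hW₀max, ?_⟩
  -- Part 2
  intro m hm
  obtain ⟨hmB, hmC, hmMin⟩ := hm
  -- the set of β₁-valued components
  set T : Finset α := univ.filter (fun s => m s = β₁) with hT
  have hTmem : ∀ s : α, s ∈ T ↔ m s = β₁ := by intro s; simp [hT]
  have hTne : T.Nonempty := by
    by_contra hc
    have h1 : ∀ s : α, m s ≤ β₁ - 1 := by
      intro s
      have h2 : m s ≠ β₁ := fun h => hc ⟨s, (hTmem s).2 h⟩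
      have := hmC s
      omega
    have h3 : β₁ - 1 ∈ {b : ℤ | ∃ m' ∈ Bdot p, ∀ s : α, m' s ≤ b} := ⟨m, hmB, h1⟩
    have := hβ.2 h3
    omega
  -- the family of tight sets containing T
  set FT : Finset (Finset α) := (univ : Finset (Finset α)).filter
    (fun X => (∑ v ∈ X, m v = p X) ∧ ∀ t : α, m t = β₁ → t ∈ X) with hFT
  have hFTmem : ∀ X : Finset α,
      X ∈ FT ↔ (∑ v ∈ X, m v = p X) ∧ ∀ t : α, m t = β₁ → t ∈ X := by
    intro X; simp [hFT]
  have hFTuniv : (univ : Finset α) ∈ FT :=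
    (hFTmem _).2 ⟨hmB.2, fun t _ => Finset.mem_univ t⟩
  have hFTclosed : ∀ X ∈ FT, ∀ Y ∈ FT, X ∩ Y ∈ FT := by
    intro X hX Y hY
    obtain ⟨hX1, hX2⟩ := (hFTmem X).1 hX
    obtain ⟨hY1, hY2⟩ := (hFTmem Y).1 hY
    exact (hFTmem _).2 ⟨(tight_lattice hp hmB hX1 hY1).1,
      fun t ht => Finset.mem_inter.2 ⟨hX2 t ht, hY2 t ht⟩⟩
  obtain ⟨W, hWF, hWmin⟩ := exists_least_of_inter_closed ⟨_, hFTuniv⟩ hFTclosed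
  obtain ⟨hWtight, hWT⟩ := (hFTmem W).1 hWF
  -- membership in S1m is membership in W
  have hWS1m : ∀ s : α, s ∈ S1m p β₁ m ↔ s ∈ W := by
    intro s
    constructor
    · intro h; exact h W hWtight hWT
    · intro h X hX1 hX2
      exact hWmin X ((hFTmem X).2 ⟨hX1, hX2⟩) h
  -- Key claim: on W, all components of m are at least β₁ - 1
  have hkey : ∀ s ∈ W, β₁ - 1 ≤ m s := by
    intro s hsW
    by_contra hc
    have hs2 : m s ≤ β₁ - 2 := by omega
    -- there is a β₁-valued t outside every tight set avoiding s
    have hex : ∃ t : α, m t = β₁ ∧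
        ∀ X : Finset α, (∑ v ∈ X, m v = p X) → s ∉ X → t ∉ X := by
      set G : Finset (Finset α) := (univ : Finset (Finset α)).filter
        (fun X => (∑ v ∈ X, m v = p X) ∧ s ∉ X) with hG
      have hGmem : ∀ X : Finset α, X ∈ G ↔ (∑ v ∈ X, m v = p X) ∧ s ∉ X := by
        intro X; simp [hG]
      rcases G.eq_empty_or_nonempty with hGe | hGne
      · obtain ⟨t, htT⟩ := hTne
        refine ⟨t, (hTmem t).1 htT, fun X hX1 hX2 _ => ?_⟩
        have : X ∈ G := (hGmem X).2 ⟨hX1, hX2⟩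
        simp [hGe] at this
      · have hGclosed : ∀ X ∈ G, ∀ Y ∈ G, X ∪ Y ∈ G := by
          intro X hX Y hY
          obtain ⟨hX1, hX2⟩ := (hGmem X).1 hX
          obtain ⟨hY1, hY2⟩ := (hGmem Y).1 hY
          exact (hGmem _).2 ⟨(tight_lattice hp hmB hX1 hY1).2,
            fun hmem => (Finset.mem_union.1 hmem).elim hX2 hY2⟩
        obtain ⟨Z, hZG, hZmax⟩ := exists_greatest_of_union_closed hGne hGclosed
        obtain ⟨hZ1, hZ2⟩ := (hGmem Z).1 hZG
        -- T is not contained in Z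
        have hTZ : ¬ (∀ t : α, m t = β₁ → t ∈ Z) := by
          intro hTZ
          have : Z ∈ FT := (hFTmem Z).2 ⟨hZ1, hTZ⟩
          exact hZ2 (hWmin Z this hsW)
        push_neg at hTZ
        obtain ⟨t, ht1, ht2⟩ := hTZ
        refine ⟨t, ht1, fun X hX1 hX2 htX => ?_⟩
        exact ht2 (hZmax X ((hGmem X).2 ⟨hX1, hX2⟩) htX)
    obtain ⟨t, htβ, ht⟩ := hex
    have hst : s ≠ t := by intro h; rw [h, htβ] at hs2; omega
    -- the exchanged vector
    set m' : α → ℤ := fun v => m v + (if v = s then 1 else 0) - (if v = t then 1 else 0)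
      with hm'
    have hsum : ∀ X : Finset α, ∑ v ∈ X, m' v =
        (∑ v ∈ X, m v) + (if s ∈ X then 1 else 0) - (if t ∈ X then 1 else 0) := by
      intro X
      simp only [hm', Finset.sum_sub_distrib, Finset.sum_add_distrib]
      rw [Finset.sum_ite_eq' X s (fun _ => (1 : ℤ)),
        Finset.sum_ite_eq' X t (fun _ => (1 : ℤ))]
    have hm'B : m' ∈ Bdot p := by
      constructor
      · intro X
        have h1 := hmB.1 X
        rw [hsum X]
        by_cases hsX : s ∈ X <;> by_cases htX : t ∈ X <;> simp [hsX, htX]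
        · linarith
        · linarith
        · -- s ∉ X, t ∈ X : X is not tight
          have hnt : ∑ v ∈ X, m v ≠ p X := fun h => (ht X h hsX) htX
          omega
        · linarith
      · rw [hsum univ]
        simp [hmB.2]
    have hm's : m' s = m s + 1 := by simp [hm', hst]
    have hm't : m' t = m t - 1 := by simp [hm', Ne.symm hst]
    have hm'o : ∀ v : α, v ≠ s → v ≠ t → m' v = m v := by
      intro v h1 h2; simp [hm', h1, h2]
    have hm'C : IsCovered β₁ m' := by
      intro v
      by_cases hv : v = s
      · rw [hv, hm's]; omega
      · by_cases hv' : v = t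
        · rw [hv', hm't]; omega
        · rw [hm'o v hv hv']; exact hmC v
    -- the β₁-count strictly drops
    have hcount : (univ.filter (fun v => m' v = β₁)) = T.erase t := by
      ext v
      simp only [Finset.mem_filter, Finset.mem_univ, true_and, Finset.mem_erase, hTmem]
      by_cases hv : v = s
      · rw [hv, hm's]
        constructor
        · intro h; exfalso; omega
        · rintro ⟨-, h⟩; omega
      · by_cases hv' : v = t
        · rw [hv', hm't]
          constructor
          · intro h; exfalso; omega
          · rintro ⟨h, -⟩; exact absurd rfl h
        · rw [hm'o v hv hv']
          constructor
          · intro h; exact ⟨hv', h⟩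
          · rintro ⟨-, h⟩; exact h
    have hlt : (univ.filter (fun v => m' v = β₁)).card < T.card := by
      rw [hcount]
      have htT : t ∈ T := (hTmem t).2 htβ
      exact Finset.card_erase_lt_of_mem htT
    have := hmMin m' hm'B hm'C
    omega
  -- upper bound: h₁(Y) ≤ |T| for every Y
  have hub : ∀ Y : Finset α, p Y - (β₁ - 1) * Y.card ≤ (T.card : ℤ) := by
    intro Y
    have h1 : p Y - (β₁ - 1) * Y.card ≤ (∑ v ∈ Y, m v) - (β₁ - 1) * Y.card := by
      have := hmB.1 Y; linarith
    rw [sum_shift m (β₁ - 1) Y] at h1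
    have h2 : (∑ v ∈ Y, (m v - (β₁ - 1))) ≤ ∑ v ∈ Y, (if m v = β₁ then (1 : ℤ) else 0) := by
      apply Finset.sum_le_sum
      intro v _
      have := hmC v
      split <;> omega
    have h3 : (∑ v ∈ Y, (if m v = β₁ then (1 : ℤ) else 0))
        = ((Y.filter (fun v => m v = β₁)).card : ℤ) := by
      simp [Finset.sum_boole]
    have h4 : (Y.filter (fun v => m v = β₁)).card ≤ T.card := by
      apply Finset.card_le_card
      intro v hv
      rw [hTmem]
      exact (Finset.mem_filter.1 hv).2
    have h4' : ((Y.filter (fun v => m v = β₁)).card : ℤ) ≤ (T.card : ℤ) := by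
      exact_mod_cast h4
    linarith
  -- the value at W: h₁(W) = |T|
  have hWfilter : W.filter (fun v => m v = β₁) = T := by
    ext v
    simp only [Finset.mem_filter, hTmem]
    constructor
    · rintro ⟨-, h⟩; exact h
    · intro h; exact ⟨hWT v h, h⟩
  have hWval : p W - (β₁ - 1) * W.card = (T.card : ℤ) := by
    have h1 : p W - (β₁ - 1) * W.card = ∑ v ∈ W, (m v - (β₁ - 1)) := by
      rw [← hWtight]; exact sum_shift m (β₁ - 1) W
    have h2 : (∑ v ∈ W, (m v - (β₁ - 1)))
        = ∑ v ∈ W, (if m v = β₁ then (1 : ℤ) else 0) := by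
      apply Finset.sum_congr rfl
      intro v hv
      have ha := hkey v hv
      have hb := hmC v
      split <;> omega
    have h3 : (∑ v ∈ W, (if m v = β₁ then (1 : ℤ) else 0))
        = ((W.filter (fun v => m v = β₁)).card : ℤ) := by
      simp [Finset.sum_boole]
    rw [h1, h2, h3, hWfilter]
  -- W is a maximizer
  have hWmax : IsMax W := by
    intro Y
    rw [hWval]
    exact hub Y
  -- every maximizer is tight and contains T
  have hmaxprop : ∀ X : Finset α, IsMax X →
      (∑ v ∈ X, m v = p X) ∧ ∀ t : α, m t = β₁ → t ∈ X := by
    intro X hX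
    have h1 : p X - (β₁ - 1) * X.card = (T.card : ℤ) :=
      le_antisymm (hub X) (hWval ▸ hX W)
    have h2 := hmB.1 X
    have h3 : (∑ v ∈ X, (m v - (β₁ - 1)))
        ≤ ((X.filter (fun v => m v = β₁)).card : ℤ) := by
      have ha : (∑ v ∈ X, (m v - (β₁ - 1))) ≤ ∑ v ∈ X, (if m v = β₁ then (1 : ℤ) else 0) := by
        apply Finset.sum_le_sum
        intro v _
        have := hmC v
        split <;> omega
      have hb : (∑ v ∈ X, (if m v = β₁ then (1 : ℤ) else 0))
          = ((X.filter (fun v => m v = β₁)).card : ℤ) := by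
        simp [Finset.sum_boole]
      linarith
    have h4 : (X.filter (fun v => m v = β₁)).card ≤ T.card := by
      apply Finset.card_le_card
      intro v hv
      rw [hTmem]
      exact (Finset.mem_filter.1 hv).2
    have h4' : ((X.filter (fun v => m v = β₁)).card : ℤ) ≤ (T.card : ℤ) := by
      exact_mod_cast h4
    have h5 : (∑ v ∈ X, m v) - (β₁ - 1) * X.card = ∑ v ∈ X, (m v - (β₁ - 1)) :=
      sum_shift m (β₁ - 1) X
    -- tightness
    have htight : ∑ v ∈ X, m v = p X := by linarith
    refine ⟨htight, ?_⟩
    -- T ⊆ X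
    have h6 : (T.card : ℤ) ≤ ((X.filter (fun v => m v = β₁)).card : ℤ) := by
      linarith
    have h6' : T.card ≤ (X.filter (fun v => m v = β₁)).card := by exact_mod_cast h6
    have h7 : X.filter (fun v => m v = β₁) = T :=
      Finset.eq_of_subset_of_card_le
        (fun v hv => (hTmem v).2 (Finset.mem_filter.1 hv).2) h6'
    intro t ht
    have : t ∈ X.filter (fun v => m v = β₁) := h7 ▸ (hTmem t).2 ht
    exact (Finset.mem_filter.1 this).1
  -- conclude: S1m p β₁ m = ↑S₁
  ext s
  simp only [Finset.coe_sort_coe, Finset.mem_coe]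
  rw [show (s ∈ S1m p β₁ m) ↔ s ∈ W from hWS1m s, hS₁ s]
  constructor
  · intro hsW X hX
    obtain ⟨hX1, hX2⟩ := hmaxprop X hX
    exact hWmin X ((hFTmem X).2 ⟨hX1, hX2⟩) hsW
  · intro h
    exact h W hWmax
end

section
/- Let p be an integer-valued supermodular set-function on the subsets of a nonempty finite set S with p(∅) = 0, assume Ḃ(p) is nonempty, and set r₁ := p(S₁) − (β₁ − 1)·|S₁|. Then: (i) an r₁-element subset L of S₁ satisfies |L ∩ X| ≥ p₁(X) − (β₁ − 1)·|X| for every X ⊆ S₁ if and only if L = {s ∈ S₁ : m₁(s) = β₁} for some decreasingly minimal element m₁ of Ḃ(p₁); (ii) the family ℬ₁ of all such subsets L is nonempty and forms the family of bases of a matroid on ground set S₁. -/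
open Finset

variable {α : Type*}

set_option linter.unusedSectionVars false

namespace Stmt7Aux

open Finset

variable {T : Type*} [Fintype T] [DecidableEq T]

/-- tight sets for `m` w.r.t. `q` -/
def Tight (q : Finset T → ℤ) (m : T → ℤ) (X : Finset T) : Prop :=
  ∑ v ∈ X, m v = q X

/-- the elementary exchange vector -/
def mEx (m : T → ℤ) (s t : T) : T → ℤ :=
  fun v => m v + (if v = t then 1 else 0) - (if v = s then 1 else 0)

lemma sum_mEx (m : T → ℤ) (s t : T) (X : Finset T) :
    ∑ v ∈ X, mEx m s t v
      = ∑ v ∈ X, m v + (if t ∈ X then 1 else 0) - (if s ∈ X then 1 else 0) := by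
  simp [mEx, Finset.sum_add_distrib, Finset.sum_sub_distrib, Finset.sum_ite_eq' X]

lemma tight_inter_union {q : Finset T → ℤ} {m : T → ℤ} (hq : Supermodular q)
    (hm : m ∈ Bdot q) {X Y : Finset T} (hX : Tight q m X) (hY : Tight q m Y) :
    Tight q m (X ∩ Y) ∧ Tight q m (X ∪ Y) := by
  have h1 := hq X Y
  have h2 := hm.1 (X ∩ Y)
  have h3 := hm.1 (X ∪ Y)
  have h4 : ∑ v ∈ X ∪ Y, m v + ∑ v ∈ X ∩ Y, m v = ∑ v ∈ X, m v + ∑ v ∈ Y, m v :=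
    Finset.sum_union_inter
  unfold Tight at *
  omega

lemma tight_empty {q : Finset T → ℤ} {m : T → ℤ} (hq0 : q ∅ = 0) : Tight q m ∅ := by
  simp [Tight, hq0]

lemma mEx_mem {q : Finset T → ℤ} {m : T → ℤ} {s t : T} (hm : m ∈ Bdot q)
    (hvalid : ∀ X, Tight q m X → s ∈ X → t ∈ X) : mEx m s t ∈ Bdot q := by
  constructor
  · intro X
    rw [sum_mEx]
    have h1 := hm.1 X
    by_cases hs : s ∈ X
    · by_cases ht : t ∈ X
      · simp [hs, ht]; omega
      · have hnt : ¬ Tight q m X := fun h => ht (hvalid X h hs)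
        unfold Tight at hnt
        simp [hs, ht]
        omega
    · split_ifs <;> omega
  · rw [sum_mEx]
    simp [hm.2]

/-- The minimal tight set containing `s`. -/
lemma exists_min_tight {q : Finset T → ℤ} {m : T → ℤ} (hq : Supermodular q)
    (hm : m ∈ Bdot q) (s : T) :
    ∃ D : Finset T, Tight q m D ∧ s ∈ D ∧ ∀ X, Tight q m X → s ∈ X → D ⊆ X := by
  classical
  set F : Finset (Finset T) :=
    (univ : Finset T).powerset.filter (fun X => Tight q m X ∧ s ∈ X) with hF
  have hFne : F.Nonempty := by
    refine ⟨univ, ?_⟩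
    simp only [hF, Finset.mem_filter, Finset.mem_powerset]
    exact ⟨Finset.Subset.refl _, hm.2, Finset.mem_univ s⟩
  refine ⟨F.inf' hFne id, ?_, ?_⟩
  · have : Tight q m (F.inf' hFne id) ∧ s ∈ F.inf' hFne id := by
      apply Finset.inf'_induction (p := fun X => Tight q m X ∧ s ∈ X)
      · rintro a ⟨ha1, ha2⟩ b ⟨hb1, hb2⟩
        rw [Finset.inf_eq_inter]
        exact ⟨(tight_inter_union hq hm ha1 hb1).1, Finset.mem_inter.mpr ⟨ha2, hb2⟩⟩
      · intro X hX
        exact (Finset.mem_filter.mp hX).2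
    exact this.1
  constructor
  · have : Tight q m (F.inf' hFne id) ∧ s ∈ F.inf' hFne id := by
      apply Finset.inf'_induction (p := fun X => Tight q m X ∧ s ∈ X)
      · rintro a ⟨ha1, ha2⟩ b ⟨hb1, hb2⟩
        rw [Finset.inf_eq_inter]
        exact ⟨(tight_inter_union hq hm ha1 hb1).1, Finset.mem_inter.mpr ⟨ha2, hb2⟩⟩
      · intro X hX
        exact (Finset.mem_filter.mp hX).2
    exact this.2
  · intro X h1 h2
    exact Finset.inf'_le id
      (Finset.mem_filter.mpr ⟨Finset.mem_powerset.mpr (Finset.subset_univ X), h1, h2⟩)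

/-- The maximal tight set avoiding `t`. -/
lemma exists_max_tight_avoid {q : Finset T → ℤ} {m : T → ℤ} (hq : Supermodular q)
    (hq0 : q ∅ = 0) (hm : m ∈ Bdot q) (t : T) :
    ∃ U : Finset T, Tight q m U ∧ t ∉ U ∧ ∀ X, Tight q m X → t ∉ X → X ⊆ U := by
  classical
  set F : Finset (Finset T) :=
    (univ : Finset T).powerset.filter (fun X => Tight q m X ∧ t ∉ X) with hF
  refine ⟨F.sup id, ?_, ?_, ?_⟩
  · have : Tight q m (F.sup id) ∧ t ∉ F.sup id := by
      apply Finset.sup_induction (p := fun X => Tight q m X ∧ t ∉ X)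
      · exact ⟨tight_empty hq0, by simp⟩
      · rintro a ⟨ha1, ha2⟩ b ⟨hb1, hb2⟩
        rw [Finset.sup_eq_union]
        refine ⟨(tight_inter_union hq hm ha1 hb1).2, ?_⟩
        simp [ha2, hb2]
      · intro X hX
        exact (Finset.mem_filter.mp hX).2
    exact this.1
  · have : Tight q m (F.sup id) ∧ t ∉ F.sup id := by
      apply Finset.sup_induction (p := fun X => Tight q m X ∧ t ∉ X)
      · exact ⟨tight_empty hq0, by simp⟩
      · rintro a ⟨ha1, ha2⟩ b ⟨hb1, hb2⟩
        rw [Finset.sup_eq_union]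
        refine ⟨(tight_inter_union hq hm ha1 hb1).2, ?_⟩
        simp [ha2, hb2]
      · intro X hX
        exact (Finset.mem_filter.mp hX).2
    exact this.2
  · intro X h1 h2
    exact Finset.le_sup (f := id)
      (Finset.mem_filter.mpr ⟨Finset.mem_powerset.mpr (Finset.subset_univ X), h1, h2⟩)

/-- the basic exchange lemma between two members of `Bdot q` -/
lemma exc1 {q : Finset T → ℤ} (hq : Supermodular q) {m m' : T → ℤ}
    (hm : m ∈ Bdot q) (hm' : m' ∈ Bdot q) {s : T} (hs : m' s < m s) :
    ∃ t, t ≠ s ∧ m t < m' t ∧ mEx m s t ∈ Bdot q := by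
  obtain ⟨D, hD1, hD2, hD3⟩ := exists_min_tight hq hm s
  have hex : ∃ t ∈ D, m t < m' t := by
    by_contra hcon
    push_neg at hcon
    have h1 : ∑ v ∈ D.erase s, m' v ≤ ∑ v ∈ D.erase s, m v :=
      Finset.sum_le_sum (fun v hv => hcon v (Finset.mem_of_mem_erase hv))
    have h2 := Finset.sum_erase_add D m hD2
    have h3 := Finset.sum_erase_add D m' hD2
    have h4 : q D ≤ ∑ v ∈ D, m' v := hm'.1 D
    have h5 : ∑ v ∈ D, m v = q D := hD1
    omega
  obtain ⟨t, htD, hlt⟩ := hex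
  have hts : t ≠ s := by
    rintro rfl; omega
  exact ⟨t, hts, hlt, mEx_mem hm (fun X h1 h2 => hD3 X h1 h2 htD)⟩

end Stmt7Aux
namespace Stmt7Aux

open Finset

variable {T : Type*} [Fintype T] [DecidableEq T]

/-- `Bdot q` is nonempty for a supermodular `q` with `q ∅ = 0` (greedy). -/
lemma bdot_nonempty {q : Finset T → ℤ} (hq : Supermodular q) (hq0 : q ∅ = 0) :
    (Bdot q).Nonempty := by
  classical
  set n := Fintype.card T with hn
  set e : T ≃ Fin n := Fintype.equivFin T with he
  set blw : T → Finset T := fun t => univ.filter (fun u => e u ≤ e t) with hblw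
  set sblw : T → Finset T := fun t => univ.filter (fun u => e u < e t) with hsblw
  set m : T → ℤ := fun t => q (blw t) - q (sblw t) with hm
  have key : ∀ X : Finset T, q X ≤ ∑ v ∈ X, m v := by
    intro X
    induction X using Finset.strongInduction with
    | _ X ih =>
      rcases X.eq_empty_or_nonempty with rfl | hXne
      · simp [hq0]
      obtain ⟨t, htX, htmax⟩ := X.exists_max_image (fun u => e u) hXne
      have hinter : X ∩ sblw t = X.erase t := by
        ext u
        simp only [Finset.mem_inter, hsblw, Finset.mem_filter, Finset.mem_univ, true_and,
          Finset.mem_erase]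
        constructor
        · rintro ⟨h1, h2⟩
          exact ⟨fun h => absurd (h ▸ h2) (lt_irrefl _), h1⟩
        · rintro ⟨h1, h2⟩
          refine ⟨h2, lt_of_le_of_ne (htmax u h2) ?_⟩
          intro h
          exact h1 (e.injective h)
      have hunion : X ∪ sblw t = blw t := by
        ext u
        simp only [Finset.mem_union, hsblw, hblw, Finset.mem_filter, Finset.mem_univ, true_and]
        constructor
        · rintro (h | h)
          · exact htmax u h
          · exact le_of_lt h
        · intro h
          rcases lt_or_eq_of_le h with h | h
          · right; exact h
          · left; exact (e.injective h) ▸ htX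
      have hsm := hq X (sblw t)
      rw [hinter, hunion] at hsm
      have ih' := ih (X.erase t) (Finset.erase_ssubset htX)
      have hsum := Finset.sum_erase_add X m htX
      have hmt : m t = q (blw t) - q (sblw t) := rfl
      omega
  have tel : ∀ k : ℕ, k ≤ n →
      ∑ v ∈ univ.filter (fun u => (e u : ℕ) < k), m v
        = q (univ.filter (fun u => (e u : ℕ) < k)) := by
    intro k
    induction k with
    | zero => simp [hq0]
    | succ k ih =>
      intro hk
      set t := e.symm ⟨k, hk⟩ with ht
      have het : (e t : ℕ) = k := by simp [ht]
      have h1 : univ.filter (fun u => (e u : ℕ) < k + 1)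
          = insert t (univ.filter (fun u => (e u : ℕ) < k)) := by
        ext u
        simp only [Finset.mem_filter, Finset.mem_univ, true_and, Finset.mem_insert]
        constructor
        · intro h
          rcases Nat.lt_succ_iff_lt_or_eq.mp h with h | h
          · right; exact h
          · left
            apply e.injective
            apply Fin.ext
            rw [het, h]
        · rintro (rfl | h)
          · omega
          · omega
      have htnotmem : t ∉ univ.filter (fun u => (e u : ℕ) < k) := by
        simp [het]
      have hblweq : blw t = univ.filter (fun u => (e u : ℕ) < k + 1) := by
        ext u
        simp only [hblw, Finset.mem_filter, Finset.mem_univ, true_and, Fin.le_def, het]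
        try omega
      have hsblweq : sblw t = univ.filter (fun u => (e u : ℕ) < k) := by
        ext u
        simp only [hsblw, Finset.mem_filter, Finset.mem_univ, true_and, Fin.lt_def, het]
        try omega
      rw [h1, Finset.sum_insert htnotmem, ih (Nat.le_of_succ_le hk)]
      have hmt : m t = q (blw t) - q (sblw t) := rfl
      rw [hblweq, hsblweq, h1] at hmt
      omega
  have huniv : ∑ v, m v = q univ := by
    have h := tel n le_rfl
    have hfull : univ.filter (fun u => (e u : ℕ) < n) = univ := by
      apply Finset.filter_true_of_mem
      intro u _
      exact (e u).isLt
    rwa [hfull] at h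
  exact ⟨m, key, huniv⟩

lemma sum_le_with_strict {X : Finset T} {f : T → ℤ} {c : ℤ} {t : T} (htX : t ∈ X)
    (hbound : ∀ v ∈ X, f v ≤ c) (hstrict : f t ≤ c - 1) :
    ∑ v ∈ X, f v ≤ (X.card : ℤ) * c - 1 := by
  have h1 : ∑ v ∈ X.erase t, f v ≤ ∑ v ∈ X.erase t, c :=
    Finset.sum_le_sum (fun v hv => hbound v (Finset.mem_of_mem_erase hv))
  have h2 := Finset.sum_erase_add X f htX
  have h3 : ((X.erase t).card : ℤ) + 1 = X.card := by
    exact_mod_cast Finset.card_erase_add_one htX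
  rw [Finset.sum_const, nsmul_eq_mul] at h1
  have h4 : (X.card : ℤ) * c = ((X.erase t).card : ℤ) * c + c := by
    rw [← h3]; ring
  linarith [h1, h2, h3, h4]

end Stmt7Aux
namespace Stmt7Aux

open Finset

variable {T : Type*} [Fintype T] [DecidableEq T]

lemma stepA {q : Finset T → ℤ} {γ : ℤ} (hq : Supermodular q)
    (hP3 : ∀ X : Finset T, q X ≤ γ * X.card) {m : T → ℤ} (hm : m ∈ Bdot q)
    {s : T} (hs : γ + 1 ≤ m s) :
    ∃ t, t ≠ s ∧ m t ≤ m s - 2 ∧ mEx m s t ∈ Bdot q := by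
  obtain ⟨D, hD1, hD2, hD3⟩ := exists_min_tight hq hm s
  have hex : ∃ t ∈ D, m t ≤ m s - 2 := by
    by_contra hcon
    push_neg at hcon
    have h1 : ∀ v ∈ D.erase s, γ ≤ m v := by
      intro v hv
      have := hcon v (Finset.mem_of_mem_erase hv)
      omega
    have h2 : ∑ v ∈ D.erase s, γ ≤ ∑ v ∈ D.erase s, m v := Finset.sum_le_sum h1
    rw [Finset.sum_const, nsmul_eq_mul] at h2
    have h3 := Finset.sum_erase_add D m hD2
    have h4 : ((D.erase s).card : ℤ) + 1 = D.card := by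
      exact_mod_cast Finset.card_erase_add_one hD2
    have h5 : ∑ v ∈ D, m v = q D := hD1
    have h6 := hP3 D
    have h7 : (D.card : ℤ) * γ = ((D.erase s).card : ℤ) * γ + γ := by
      rw [← h4]; ring
    have h8 : ((D.erase s).card : ℤ) * γ = γ * ((D.erase s).card : ℤ) := mul_comm _ _
    have h9 : (D.card : ℤ) * γ = γ * (D.card : ℤ) := mul_comm _ _
    linarith
  obtain ⟨t, htD, hgap⟩ := hex
  have hts : t ≠ s := by rintro rfl; omega
  exact ⟨t, hts, hgap, mEx_mem hm (fun X h1 h2 => hD3 X h1 h2 htD)⟩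

lemma stepB {q : Finset T → ℤ} {γ r : ℤ} (hq : Supermodular q) (hq0 : q ∅ = 0)
    (hP2 : ∀ X : Finset T, X ≠ univ → q X - (γ - 1) * X.card ≤ r - 1)
    (hruniv : q univ = (γ - 1) * (univ : Finset T).card + r)
    {m : T → ℤ} (hm : m ∈ Bdot q) {t : T} (ht : m t ≤ γ - 2) :
    ∃ s, s ≠ t ∧ m t ≤ m s - 2 ∧ mEx m s t ∈ Bdot q := by
  obtain ⟨U, hU1, hU2, hU3⟩ := exists_max_tight_avoid hq hq0 hm t
  have hUne : U ≠ univ := fun h => hU2 (h ▸ Finset.mem_univ t)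
  have hex : ∃ s, s ∉ U ∧ s ≠ t ∧ m t + 2 ≤ m s := by
    by_contra hcon
    push_neg at hcon
    have hall : ∀ v ∈ univ \ U, m v ≤ γ - 1 := by
      intro v hv
      rcases eq_or_ne v t with rfl | hvt
      · omega
      · have hvU : v ∉ U := (Finset.mem_sdiff.mp hv).2
        have := hcon v hvU hvt
        omega
    have htmem : t ∈ univ \ U := Finset.mem_sdiff.mpr ⟨Finset.mem_univ t, hU2⟩
    have hbound : ∑ v ∈ univ \ U, m v ≤ (((univ \ U).card : ℤ)) * (γ - 1) - 1 :=
      sum_le_with_strict htmem hall (by omega)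
    have hsplit : ∑ v ∈ univ \ U, m v + ∑ v ∈ U, m v = ∑ v, m v :=
      Finset.sum_sdiff (Finset.subset_univ U)
    have hUsum : ∑ v ∈ U, m v = q U := hU1
    have hU4 : q U - (γ - 1) * U.card ≤ r - 1 := hP2 U hUne
    have htot : ∑ v, m v = q univ := hm.2
    have hcard : ((univ \ U).card : ℤ) + U.card = (univ : Finset T).card := by
      exact_mod_cast Finset.card_sdiff_add_card_eq_card (Finset.subset_univ U)
    have hmul : (γ - 1) * (((univ : Finset T)).card : ℤ)
        = (γ - 1) * (((univ \ U)).card : ℤ) + (γ - 1) * ((U.card : ℤ)) := by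
      rw [← hcard]; ring
    have hcomm : (((univ \ U)).card : ℤ) * (γ - 1) = (γ - 1) * (((univ \ U)).card : ℤ) :=
      mul_comm _ _
    linarith [hbound, hsplit, hUsum, hU4, htot, hruniv, hmul, hcomm]
  obtain ⟨s, hsU, hst, hgap⟩ := hex
  have hvalid : ∀ X, Tight q m X → s ∈ X → t ∈ X := by
    intro X h1 h2
    by_contra h3
    exact hsU (hU3 X h1 h3 h2)
  exact ⟨s, hst, by omega, mEx_mem hm hvalid⟩

lemma sum_eq_on_compl {f g : T → ℤ} {s t : T} (hst : s ≠ t)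
    (h : ∀ v, v ≠ s → v ≠ t → f v = g v) :
    ∑ v, f v + (g s + g t) = ∑ v, g v + (f s + f t) := by
  have hsub : ({s, t} : Finset T) ⊆ univ := Finset.subset_univ _
  have h1 : ∑ v ∈ univ \ {s, t}, f v = ∑ v ∈ univ \ {s, t}, g v := by
    apply Finset.sum_congr rfl
    intro v hv
    have hv' := Finset.mem_sdiff.mp hv
    simp only [Finset.mem_insert, Finset.mem_singleton, not_or] at hv'
    exact h v hv'.2.1 hv'.2.2
  have h2 : ∑ v ∈ univ \ {s, t}, f v + ∑ v ∈ {s, t}, f v = ∑ v, f v :=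
    Finset.sum_sdiff hsub
  have h3 : ∑ v ∈ univ \ {s, t}, g v + ∑ v ∈ {s, t}, g v = ∑ v, g v :=
    Finset.sum_sdiff hsub
  rw [Finset.sum_pair hst] at h2 h3
  omega

lemma phi_dec {γ : ℤ} {m : T → ℤ} {s t : T} (hst : t ≠ s) (hgap : m t ≤ m s - 2) :
    ∑ v, (mEx m s t v - (γ - 1)) ^ 2 + 2 ≤ ∑ v, (m v - (γ - 1)) ^ 2 := by
  have hmexs : mEx m s t s = m s - 1 := by simp [mEx, hst.symm]
  have hmext : mEx m s t t = m t + 1 := by simp [mEx, hst]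
  have hoff : ∀ v, v ≠ s → v ≠ t →
      (mEx m s t v - (γ - 1)) ^ 2 = (m v - (γ - 1)) ^ 2 := by
    intro v h1 h2
    simp [mEx, h1, h2]
  have hcompl := sum_eq_on_compl (f := fun v => (mEx m s t v - (γ - 1)) ^ 2)
    (g := fun v => (m v - (γ - 1)) ^ 2) (Ne.symm hst) hoff
  -- this : ∑ f + (g s + g t) = ∑ g + (f s + f t)
  have hkey : (mEx m s t s - (γ - 1)) ^ 2 + (mEx m s t t - (γ - 1)) ^ 2 + 2
      ≤ (m s - (γ - 1)) ^ 2 + (m t - (γ - 1)) ^ 2 := by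
    rw [hmexs, hmext]
    nlinarith [hgap]
  linarith [hcompl, hkey]

lemma exists_boxed {q : Finset T → ℤ} {γ r : ℤ} (hq : Supermodular q) (hq0 : q ∅ = 0)
    (hP3 : ∀ X : Finset T, q X ≤ γ * X.card)
    (hP2 : ∀ X : Finset T, X ≠ univ → q X - (γ - 1) * X.card ≤ r - 1)
    (hruniv : q univ = (γ - 1) * (univ : Finset T).card + r) :
    ∃ m ∈ Bdot q, ∀ s, γ - 1 ≤ m s ∧ m s ≤ γ := by
  obtain ⟨m₀, hm₀⟩ := bdot_nonempty hq hq0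
  suffices h : ∀ N : ℕ, ∀ m ∈ Bdot q, (∑ v, (m v - (γ - 1)) ^ 2).toNat ≤ N →
      ∃ m' ∈ Bdot q, ∀ s, γ - 1 ≤ m' s ∧ m' s ≤ γ by
    exact h _ m₀ hm₀ le_rfl
  intro N
  induction N with
  | zero =>
    intro m hm hφ
    by_cases hbox : ∀ s, γ - 1 ≤ m s ∧ m s ≤ γ
    · exact ⟨m, hm, hbox⟩
    · exfalso
      push_neg at hbox
      obtain ⟨s, hs⟩ := hbox
      have h1 : 1 ≤ (m s - (γ - 1)) ^ 2 := by
        rcases lt_or_ge (m s) (γ - 1) with h | h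
        · nlinarith
        · have := hs h; nlinarith
      have h2 : (m s - (γ - 1)) ^ 2 ≤ ∑ v, (m v - (γ - 1)) ^ 2 :=
        Finset.single_le_sum (f := fun v => (m v - (γ - 1)) ^ 2)
          (fun v _ => sq_nonneg _) (Finset.mem_univ s)
      omega
  | succ N ih =>
    intro m hm hφ
    by_cases hbox : ∀ s, γ - 1 ≤ m s ∧ m s ≤ γ
    · exact ⟨m, hm, hbox⟩
    · push_neg at hbox
      obtain ⟨s, hs⟩ := hbox
      have hnext : ∃ m'' ∈ Bdot q, ∑ v, (m'' v - (γ - 1)) ^ 2 + 2 ≤ ∑ v, (m v - (γ - 1)) ^ 2 := by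
        rcases lt_or_ge (m s) (γ - 1) with hlow | hge
        · obtain ⟨s', hs't, hgap, hmem⟩ := stepB hq hq0 hP2 hruniv hm (t := s) (by omega)
          exact ⟨mEx m s' s, hmem, phi_dec (Ne.symm hs't) hgap⟩
        · have hup : γ + 1 ≤ m s := by
            have := hs hge; omega
          obtain ⟨t, hts, hgap, hmem⟩ := stepA hq hP3 hm hup
          exact ⟨mEx m s t, hmem, phi_dec hts hgap⟩
      obtain ⟨m'', hmem, hdec⟩ := hnext
      apply ih m'' hmem
      have hnn : (0 : ℤ) ≤ ∑ v, (m'' v - (γ - 1)) ^ 2 :=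
        Finset.sum_nonneg (fun v _ => sq_nonneg _)
      omega

end Stmt7Aux
namespace Stmt7Aux

open Finset

variable {T : Type*} [Fintype T] [DecidableEq T]

/-- The characteristic-type vector taking value `γ` on `L` and `γ-1` off `L`. -/
def chi (γ : ℤ) (L : Finset T) : T → ℤ := fun s => if s ∈ L then γ else γ - 1

lemma sum_chi (γ : ℤ) (L X : Finset T) :
    ∑ v ∈ X, chi γ L v = (γ - 1) * X.card + ((L ∩ X).card : ℤ) := by
  have h1 : ∀ v ∈ X, chi γ L v = (γ - 1) + (if v ∈ L then (1 : ℤ) else 0) := by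
    intro v _
    by_cases h : v ∈ L <;> simp [chi, h]
  rw [Finset.sum_congr rfl h1, Finset.sum_add_distrib, Finset.sum_const, nsmul_eq_mul,
    Finset.sum_boole]
  have h2 : X.filter (· ∈ L) = L ∩ X := by
    ext v; simp [Finset.mem_inter, and_comm]
  rw [h2]
  ring

lemma chi_mem_Bdot_iff {q : Finset T → ℤ} {γ r : ℤ}
    (hruniv : q univ = (γ - 1) * (univ : Finset T).card + r) (L : Finset T) :
    chi γ L ∈ Bdot q
      ↔ ((L.card : ℤ) = r ∧
          ∀ X : Finset T, q X - (γ - 1) * X.card ≤ ((L ∩ X).card : ℤ)) := by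
  constructor
  · intro hm
    have hcard : (L.card : ℤ) = r := by
      have h := hm.2
      rw [sum_chi, hruniv] at h
      have : L ∩ univ = L := Finset.inter_univ L
      rw [this] at h
      omega
    refine ⟨hcard, fun X => ?_⟩
    have h := hm.1 X
    rw [sum_chi] at h
    omega
  · rintro ⟨hcard, hineq⟩
    constructor
    · intro X
      rw [sum_chi]
      have := hineq X
      omega
    · rw [sum_chi, hruniv, Finset.inter_univ, hcard]

lemma sortedDesc_coe (m : T → ℤ) :
    ((sortedDesc m : List ℤ) : Multiset ℤ) = Finset.univ.val.map m := by
  rw [sortedDesc, Multiset.coe_reverse, Multiset.sort_eq]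

lemma sortedDesc_sorted (m : T → ℤ) : List.Pairwise (· ≥ ·) (sortedDesc m) := by
  have h := Multiset.pairwise_sort (Finset.univ.val.map m) (· ≤ ·)
  rw [sortedDesc]
  rw [List.pairwise_reverse]
  exact h

lemma sortedDesc_length (m : T → ℤ) :
    (sortedDesc m).length = (univ : Finset T).card := by
  have := congrArg Multiset.card (sortedDesc_coe m)
  simpa using this

lemma sortedDesc_unique {m : T → ℤ} {l : List ℤ}
    (hperm : (Finset.univ.val.map m) = (l : Multiset ℤ))
    (hsort : List.Pairwise (· ≥ ·) l) : sortedDesc m = l := by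
  haveI : Std.Antisymm (α := ℤ) (· ≥ ·) := ⟨fun a b h1 h2 => le_antisymm h2 h1⟩
  exact List.Perm.eq_of_pairwise' (sortedDesc_sorted m) hsort
    (Multiset.coe_eq_coe.mp (by rw [sortedDesc_coe, hperm]))

lemma chi_multiset (γ : ℤ) (L : Finset T) :
    Finset.univ.val.map (chi γ L)
      = Multiset.replicate L.card γ
        + Multiset.replicate ((univ : Finset T).card - L.card) (γ - 1) := by
  have hsub : L.val ≤ (univ : Finset T).val :=
    Finset.val_le_iff.mpr (Finset.subset_univ L)
  have hsplit : (univ : Finset T).val = (univ \ L).val + L.val := by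
    rw [Finset.sdiff_val, tsub_add_cancel_of_le hsub]
  rw [hsplit, Multiset.map_add]
  have h1 : (L.val).map (chi γ L) = Multiset.replicate L.card γ := by
    have he : (L.val).map (chi γ L) = (L.val).map (fun _ => γ) :=
      Multiset.map_congr rfl (fun x hx => by simp [chi, Finset.mem_def.mpr hx])
    rw [he, Multiset.map_const']
    rfl
  have h2 : ((univ \ L).val).map (chi γ L)
      = Multiset.replicate ((univ : Finset T).card - L.card) (γ - 1) := by
    have hx : ∀ x ∈ (univ \ L).val, chi γ L x = γ - 1 := by
      intro x hx
      have : x ∈ univ \ L := hx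
      have hxL : x ∉ L := (Finset.mem_sdiff.mp this).2
      simp [chi, hxL]
    have he : ((univ \ L).val).map (chi γ L) = ((univ \ L).val).map (fun _ => γ - 1) :=
      Multiset.map_congr rfl hx
    rw [he, Multiset.map_const']
    have hc : Multiset.card (univ \ L).val = (univ \ L).card := rfl
    rw [hc, Finset.card_sdiff_of_subset (Finset.subset_univ L)]
  rw [h1, h2]
  exact add_comm _ _

lemma replicate_append_sorted (γ : ℤ) (a b : ℕ) :
    List.Pairwise (· ≥ ·) (List.replicate a γ ++ List.replicate b (γ - 1)) := by
  rw [List.pairwise_append]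
  refine ⟨List.pairwise_replicate.mpr (by omega), List.pairwise_replicate.mpr (by omega), ?_⟩
  intro x hx y hy
  rw [List.eq_of_mem_replicate hx, List.eq_of_mem_replicate hy]
  omega

lemma sortedDesc_chi (γ : ℤ) (L : Finset T) :
    sortedDesc (chi γ L)
      = List.replicate L.card γ
        ++ List.replicate ((univ : Finset T).card - L.card) (γ - 1) := by
  apply sortedDesc_unique
  · rw [chi_multiset]
    rfl
  · exact replicate_append_sorted γ _ _

lemma mem_sortedDesc {m : T → ℤ} {x : ℤ} :
    x ∈ sortedDesc m ↔ ∃ s : T, m s = x := by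
  rw [← Multiset.mem_coe, sortedDesc_coe]
  simp [Multiset.mem_map, Finset.mem_val]

lemma values_of_sortedDesc_eq {m : T → ℤ} {a b : ℕ}
    (h : sortedDesc m = List.replicate a γ ++ List.replicate b (γ - 1)) (s : T) :
    m s = γ ∨ m s = γ - 1 := by
  have hmem : m s ∈ sortedDesc m := mem_sortedDesc.mpr ⟨s, rfl⟩
  rw [h, List.mem_append] at hmem
  rcases hmem with h' | h'
  · left; exact List.eq_of_mem_replicate h'
  · right; exact List.eq_of_mem_replicate h'

end Stmt7Aux
namespace Stmt7Aux

open Finset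

variable {T : Type*} [Fintype T] [DecidableEq T]

lemma lex_replicate (γ : ℤ) :
    ∀ (a : ℕ) (l₂ : List ℤ), l₂.Pairwise (· ≥ ·) → (∀ x ∈ l₂, x ≤ γ) →
      a + 1 ≤ l₂.count γ → ∀ b : ℕ, 1 ≤ b →
      List.Lex (· < ·) (List.replicate a γ ++ List.replicate b (γ - 1)) l₂ := by
  intro a
  induction a with
  | zero =>
    intro l₂ hs hle hcnt b hb
    have hγ : γ ∈ l₂ := by
      rw [← List.count_pos_iff]
      omega
    obtain ⟨c, t₂, rfl⟩ : ∃ c t₂, l₂ = c :: t₂ := by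
      cases l₂ with
      | nil => simp at hγ
      | cons c t₂ => exact ⟨c, t₂, rfl⟩
    have hc : c = γ := by
      rcases List.mem_cons.mp hγ with h | h
      · exact h.symm
      · exact le_antisymm (hle c List.mem_cons_self) (List.rel_of_pairwise_cons hs h)
    obtain ⟨b', rfl⟩ : ∃ b', b = b' + 1 := ⟨b - 1, by omega⟩
    rw [List.replicate_zero, List.nil_append, List.replicate_succ]
    exact List.Lex.rel (by omega)
  | succ a ih =>
    intro l₂ hs hle hcnt b hb
    have hγ : γ ∈ l₂ := by
      rw [← List.count_pos_iff]
      omega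
    obtain ⟨c, t₂, rfl⟩ : ∃ c t₂, l₂ = c :: t₂ := by
      cases l₂ with
      | nil => simp at hγ
      | cons c t₂ => exact ⟨c, t₂, rfl⟩
    have hc : c = γ := by
      rcases List.mem_cons.mp hγ with h | h
      · exact h.symm
      · exact le_antisymm (hle c List.mem_cons_self) (List.rel_of_pairwise_cons hs h)
    subst hc
    rw [List.replicate_succ, List.cons_append]
    apply List.Lex.cons
    apply ih t₂ hs.of_cons (fun x hx => hle x (List.mem_cons_of_mem _ hx)) ?_ b hb
    have := List.count_cons_self (a := c) (l := t₂)
    rw [List.count_cons] at hcnt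
    simp at hcnt
    omega

/-- the count of `γ`-valued coordinates as a list count -/
lemma count_sortedDesc (m : T → ℤ) (γ : ℤ) :
    (sortedDesc m).count γ = (univ.filter (fun s => m s = γ)).card := by
  have h1 : ((sortedDesc m) : Multiset ℤ).count γ = (sortedDesc m).count γ :=
    Multiset.coe_count γ _
  rw [← h1, sortedDesc_coe, Multiset.count_map]
  have : (univ.filter (fun s => γ = m s)).card = (univ.filter (fun s => m s = γ)).card := by
    congr 1
    apply Finset.filter_congr
    intro x _
    simp [eq_comm]
  rw [← this]
  rfl

/-- any member of `Bdot q` that is ≤ γ everywhere but has a value ≤ γ - 2 has at least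
`r+1` coordinates equal to `γ`. -/
lemma count_ge_of_deficient {q : Finset T → ℤ} {γ r : ℤ}
    (hruniv : q univ = (γ - 1) * (univ : Finset T).card + r)
    {m : T → ℤ} (hm : m ∈ Bdot q) (hle : ∀ s, m s ≤ γ) {t : T} (ht : m t ≤ γ - 2) :
    r + 1 ≤ ((univ.filter (fun s => m s = γ)).card : ℤ) := by
  set F := univ.filter (fun s => m s = γ) with hF
  have hFsub : F ⊆ univ := Finset.filter_subset _ _
  have hsplit : ∑ v ∈ univ \ F, m v + ∑ v ∈ F, m v = ∑ v, m v := Finset.sum_sdiff hFsub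
  have hFsum : ∑ v ∈ F, m v = (F.card : ℤ) * γ := by
    rw [Finset.sum_congr rfl (fun v hv => (Finset.mem_filter.mp hv).2), Finset.sum_const,
      nsmul_eq_mul]
  have htmem : t ∈ univ \ F := by
    simp only [hF, Finset.mem_sdiff, Finset.mem_univ, true_and, Finset.mem_filter]
    intro h
    omega
  have hbound : ∑ v ∈ univ \ F, m v ≤ (((univ \ F).card : ℤ)) * (γ - 1) - 1 := by
    apply sum_le_with_strict htmem
    · intro v hv
      have hv' := Finset.mem_sdiff.mp hv
      have : ¬ (m v = γ) := by
        intro h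
        exact hv'.2 (Finset.mem_filter.mpr ⟨Finset.mem_univ v, h⟩)
      have := hle v
      omega
    · omega
  have hcard : ((univ \ F).card : ℤ) + F.card = ((univ : Finset T).card : ℤ) := by
    exact_mod_cast Finset.card_sdiff_add_card_eq_card hFsub
  have htot : ∑ v, m v = q univ := hm.2
  have hmul : (γ - 1) * (((univ : Finset T)).card : ℤ)
      = (γ - 1) * (((univ \ F)).card : ℤ) + (γ - 1) * ((F.card : ℤ)) := by
    rw [← hcard]; ring
  have hcomm : (((univ \ F)).card : ℤ) * (γ - 1) = (γ - 1) * (((univ \ F)).card : ℤ) :=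
    mul_comm _ _
  have hcomm2 : ((F.card : ℤ)) * γ = γ * ((F.card : ℤ)) := mul_comm _ _
  nlinarith [hsplit, hFsum, hbound, htot, hruniv, hmul, hcomm, hcomm2]

end Stmt7Aux
namespace Stmt7Aux

open Finset

variable {T : Type*} [Fintype T] [DecidableEq T]

lemma boxed_eq_chi {γ : ℤ} {m : T → ℤ} (hbox : ∀ s, γ - 1 ≤ m s ∧ m s ≤ γ) :
    m = chi γ (univ.filter (fun s => m s = γ)) := by
  funext v
  by_cases hv : m v = γ
  · simp [chi, hv]
  · have h1 := (hbox v).1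
    have h2 := (hbox v).2
    have : m v = γ - 1 := by omega
    simp [chi, hv, this]

lemma decmin_chi {q : Finset T → ℤ} {γ r : ℤ}
    (hruniv : q univ = (γ - 1) * (univ : Finset T).card + r)
    {L : Finset T} (hL : chi γ L ∈ Bdot q) : DecMin q (chi γ L) := by
  have hl₁ := sortedDesc_chi γ L
  have hLcard : (L.card : ℤ) = r := ((chi_mem_Bdot_iff hruniv L).mp hL).1
  refine ⟨hL, fun m' hm' => ?_⟩
  by_cases hup : ∃ s, γ + 1 ≤ m' s
  · obtain ⟨s, hs⟩ := hup
    right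
    have hlen1 : 0 < (sortedDesc (chi γ L)).length := by
      rw [sortedDesc_length]
      have : s ∈ (univ : Finset T) := Finset.mem_univ s
      exact Finset.card_pos.mpr ⟨s, this⟩
    have hlen2 : 0 < (sortedDesc m').length := by
      rw [sortedDesc_length]
      exact Finset.card_pos.mpr ⟨s, Finset.mem_univ s⟩
    obtain ⟨a, t₁, hcons₁⟩ := List.exists_cons_of_ne_nil (List.ne_nil_of_length_pos hlen1)
    obtain ⟨c, t₂, hcons₂⟩ := List.exists_cons_of_ne_nil (List.ne_nil_of_length_pos hlen2)
    have ha : a ≤ γ := by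
      have hmem : a ∈ sortedDesc (chi γ L) := by
        rw [hcons₁]; exact List.mem_cons_self
      obtain ⟨sa, hsa⟩ := mem_sortedDesc.mp hmem
      by_cases h : sa ∈ L <;> simp [chi, h] at hsa <;> omega
    have hc : γ + 1 ≤ c := by
      have hmem : m' s ∈ sortedDesc m' := mem_sortedDesc.mpr ⟨s, rfl⟩
      rw [hcons₂] at hmem
      rcases List.mem_cons.mp hmem with h | h
      · omega
      · have hsorted := sortedDesc_sorted m'
        rw [hcons₂] at hsorted
        have := List.rel_of_pairwise_cons hsorted h
        omega
    rw [hcons₁, hcons₂]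
    exact List.Lex.rel (by omega)
  · push_neg at hup
    by_cases hdown : ∃ t, m' t ≤ γ - 2
    · obtain ⟨t, ht⟩ := hdown
      right
      have hle : ∀ s, m' s ≤ γ := fun s => by have := hup s; omega
      have hcnt := count_ge_of_deficient hruniv hm' hle ht
      set F := univ.filter (fun s => m' s = γ) with hF
      have hcnt' : L.card + 1 ≤ (sortedDesc m').count γ := by
        rw [count_sortedDesc]
        have : (L.card : ℤ) + 1 ≤ (F.card : ℤ) := by omega
        exact_mod_cast this
      have hb : 1 ≤ (univ : Finset T).card - L.card := by
        have h1 : F.card ≤ (univ : Finset T).card := Finset.card_le_card (Finset.filter_subset _ _)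
        have h2 : L.card + 1 ≤ F.card := by
          have : (L.card : ℤ) + 1 ≤ (F.card : ℤ) := by omega
          exact_mod_cast this
        omega
      rw [hl₁]
      apply lex_replicate γ L.card (sortedDesc m') (sortedDesc_sorted m') ?_ hcnt' _ hb
      intro x hx
      obtain ⟨sx, hsx⟩ := mem_sortedDesc.mp hx
      rw [← hsx]
      exact hle sx
    · push_neg at hdown
      have hbox : ∀ s, γ - 1 ≤ m' s ∧ m' s ≤ γ := by
        intro s
        have h1 := hup s
        have h2 := hdown s
        omega
      left
      set L' := univ.filter (fun s => m' s = γ) with hL'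
      have hm'eq : m' = chi γ L' := boxed_eq_chi hbox
      have hL'mem : chi γ L' ∈ Bdot q := hm'eq ▸ hm'
      have hL'card : (L'.card : ℤ) = r := ((chi_mem_Bdot_iff hruniv L').mp hL'mem).1
      have hcards : L.card = L'.card := by
        have : (L.card : ℤ) = (L'.card : ℤ) := by omega
        exact_mod_cast this
      rw [hl₁, hm'eq, sortedDesc_chi γ L', hcards]

lemma decmin_values {q : Finset T → ℤ} {γ r : ℤ} (hq : Supermodular q) (hq0 : q ∅ = 0)
    (hP3 : ∀ X : Finset T, q X ≤ γ * X.card)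
    (hP2 : ∀ X : Finset T, X ≠ univ → q X - (γ - 1) * X.card ≤ r - 1)
    (hruniv : q univ = (γ - 1) * (univ : Finset T).card + r)
    {m₁ : T → ℤ} (hdm : DecMin q m₁) :
    ∀ s, γ - 1 ≤ m₁ s ∧ m₁ s ≤ γ := by
  obtain ⟨mstar, hmstar, hbox⟩ := exists_boxed hq hq0 hP3 hP2 hruniv
  set Ls := univ.filter (fun s => mstar s = γ) with hLs
  have hms : mstar = chi γ Ls := boxed_eq_chi hbox
  have hchi : chi γ Ls ∈ Bdot q := hms ▸ hmstar
  have hdms : DecMin q (chi γ Ls) := decmin_chi hruniv hchi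
  have h1 : DecLE m₁ (chi γ Ls) := hdm.2 _ hchi
  have h2 : DecLE (chi γ Ls) m₁ := hdms.2 _ hdm.1
  have heq : sortedDesc m₁ = sortedDesc (chi γ Ls) := by
    haveI : IsAsymm ℤ (· < ·) := ⟨fun a b h1 h2 => absurd h1 (not_lt.mpr (le_of_lt h2))⟩
    rcases h1 with h | h
    · exact h
    rcases h2 with h' | h'
    · exact h'.symm
    · exact absurd h' (asymm h)
  rw [sortedDesc_chi γ Ls] at heq
  intro s
  rcases values_of_sortedDesc_eq heq s with h | h <;> omega

end Stmt7Aux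
namespace Stmt7Aux

open Finset

variable {T : Type*} [Fintype T] [DecidableEq T]

/-- The family `ℬ₁`. -/
def Bfam (q : Finset T → ℤ) (γ r : ℤ) (L : Finset T) : Prop :=
  (L.card : ℤ) = r ∧ ∀ X : Finset T, q X - (γ - 1) * X.card ≤ ((L ∩ X).card : ℤ)

lemma bfam_iff_chi {q : Finset T → ℤ} {γ r : ℤ}
    (hruniv : q univ = (γ - 1) * (univ : Finset T).card + r) (L : Finset T) :
    Bfam q γ r L ↔ chi γ L ∈ Bdot q := (chi_mem_Bdot_iff hruniv L).symm

lemma bfam_exchange {q : Finset T → ℤ} {γ r : ℤ} (hq : Supermodular q)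
    (hruniv : q univ = (γ - 1) * (univ : Finset T).card + r)
    {L₁ L₂ : Finset T} (h1 : Bfam q γ r L₁) (h2 : Bfam q γ r L₂)
    {s : T} (hs1 : s ∈ L₁) (hs2 : s ∉ L₂) :
    ∃ t, t ∈ L₂ ∧ t ∉ L₁ ∧ Bfam q γ r (insert t (L₁.erase s)) := by
  have hm1 : chi γ L₁ ∈ Bdot q := (bfam_iff_chi hruniv L₁).mp h1
  have hm2 : chi γ L₂ ∈ Bdot q := (bfam_iff_chi hruniv L₂).mp h2
  have hval : chi γ L₂ s < chi γ L₁ s := by simp [chi, hs1, hs2]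
  obtain ⟨t, hts, hlt, hmem⟩ := exc1 hq hm1 hm2 hval
  have ht1 : t ∉ L₁ := by
    intro h
    by_cases h2' : t ∈ L₂ <;> simp [chi, h, h2'] at hlt <;> omega
  have ht2 : t ∈ L₂ := by
    by_contra h
    simp [chi, ht1, h] at hlt
  have hkey : mEx (chi γ L₁) s t = chi γ (insert t (L₁.erase s)) := by
    funext v
    rcases eq_or_ne v t with rfl | hvt
    · simp [mEx, chi, hts, ht1, Finset.mem_insert]
    · rcases eq_or_ne v s with hvs | hvs
      · have hnot : s ∉ insert t (L₁.erase s) := by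
          simp [Finset.mem_insert]
          intro h
          exact absurd h (Ne.symm hts)
        rw [hvs]
        simp [mEx, chi, Ne.symm hts, hs1, hnot]
      · have hmemiff : v ∈ insert t (L₁.erase s) ↔ v ∈ L₁ := by
          simp [Finset.mem_insert, hvt, Finset.mem_erase, hvs]
        by_cases hv : v ∈ L₁
        · simp [mEx, chi, hvt, hvs, hv, hmemiff.mpr hv]
        · have : v ∉ insert t (L₁.erase s) := fun h => hv (hmemiff.mp h)
          simp [mEx, chi, hvt, hvs, hv, this]
  rw [hkey] at hmem
  exact ⟨t, ht2, ht1, (bfam_iff_chi hruniv _).mpr hmem⟩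

lemma bfam_aug {q : Finset T → ℤ} {γ r : ℤ} (hq : Supermodular q)
    (hruniv : q univ = (γ - 1) * (univ : Finset T).card + r)
    {L₁ L₂ A B : Finset T} (h1 : Bfam q γ r L₁) (h2 : Bfam q γ r L₂)
    (hA : A ⊆ L₁) (hB : B ⊆ L₂) (hcard : A.card < B.card) :
    ∃ x ∈ B, x ∉ A ∧ ∃ L, Bfam q γ r L ∧ insert x A ⊆ L := by
  classical
  set 𝒞 : Finset (Finset T) :=
    (univ : Finset (Finset T)).filter (fun C => Bfam q γ r C ∧ A ⊆ C) with h𝒞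
  have h𝒞ne : 𝒞.Nonempty := ⟨L₁, by simp [h𝒞, h1, hA]⟩
  obtain ⟨C, hCmem, hCmin⟩ := Finset.exists_min_image 𝒞 (fun C => (C \ (A ∪ L₂)).card) h𝒞ne
  have hC : Bfam q γ r C ∧ A ⊆ C := by
    have := Finset.mem_filter.mp hCmem
    exact this.2
  have hCsub : C ⊆ A ∪ L₂ := by
    by_contra hcon
    obtain ⟨x, hxC, hxnot⟩ := Finset.not_subset.mp hcon
    have hxA : x ∉ A := fun h => hxnot (Finset.mem_union_left _ h)
    have hxL₂ : x ∉ L₂ := fun h => hxnot (Finset.mem_union_right _ h)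
    obtain ⟨t, htL₂, htC, hC'⟩ := bfam_exchange hq hruniv hC.1 h2 hxC hxL₂
    set C' := insert t (C.erase x) with hC'def
    have hAC' : A ⊆ C' := by
      intro a ha
      exact Finset.mem_insert_of_mem
        (Finset.mem_erase.mpr ⟨fun h => hxA (h ▸ ha), hC.2 ha⟩)
    have hC'mem : C' ∈ 𝒞 := by simp [h𝒞, hC', hAC']
    have hmeas : C' \ (A ∪ L₂) = (C \ (A ∪ L₂)).erase x := by
      ext v
      simp only [hC'def, Finset.mem_sdiff, Finset.mem_insert, Finset.mem_erase,
        Finset.mem_union, not_or]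
      constructor
      · rintro ⟨h | ⟨hvx, hvC⟩, hv2⟩
        · exact absurd htL₂ (h ▸ hv2.2)
        · exact ⟨hvx, hvC, hv2⟩
      · rintro ⟨hvx, hvC, hv2⟩
        exact ⟨Or.inr ⟨hvx, hvC⟩, hv2⟩
    have hxin : x ∈ C \ (A ∪ L₂) := Finset.mem_sdiff.mpr ⟨hxC, hxnot⟩
    have hlt : (C' \ (A ∪ L₂)).card < (C \ (A ∪ L₂)).card := by
      rw [hmeas]
      exact Finset.card_erase_lt_of_mem hxin
    exact absurd (hCmin C' hC'mem) (by omega)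
  by_cases hex : ∃ x, x ∈ B ∧ x ∈ C ∧ x ∉ A
  · obtain ⟨x, hx1, hx2, hx3⟩ := hex
    exact ⟨x, hx1, hx3, C, hC.1, Finset.insert_subset hx2 hC.2⟩
  · exfalso
    push_neg at hex
    have hsub2 : C \ A ⊆ L₂ \ B := by
      intro v hv
      have hv' := Finset.mem_sdiff.mp hv
      have hvL₂ : v ∈ L₂ := by
        rcases Finset.mem_union.mp (hCsub hv'.1) with h | h
        · exact absurd h hv'.2
        · exact h
      refine Finset.mem_sdiff.mpr ⟨hvL₂, fun h => hv'.2 (hex v h hv'.1)⟩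
    have hc1 : (C \ A).card = C.card - A.card := Finset.card_sdiff_of_subset hC.2
    have hc2 : (L₂ \ B).card = L₂.card - B.card := Finset.card_sdiff_of_subset hB
    have hc3 : (C \ A).card ≤ (L₂ \ B).card := Finset.card_le_card hsub2
    have hc4 : C.card = L₂.card := by
      have : (C.card : ℤ) = (L₂.card : ℤ) := by rw [hC.1.1, h2.1]
      exact_mod_cast this
    have hc5 : A.card ≤ C.card := Finset.card_le_card hC.2
    have hc6 : B.card ≤ L₂.card := Finset.card_le_card hB
    omega

end Stmt7Aux
namespace Stmt7Aux

open Finset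

variable {T : Type*} [Fintype T] [DecidableEq T]

lemma bfam_nonempty {q : Finset T → ℤ} {γ r : ℤ} (hq : Supermodular q) (hq0 : q ∅ = 0)
    (hP3 : ∀ X : Finset T, q X ≤ γ * X.card)
    (hP2 : ∀ X : Finset T, X ≠ univ → q X - (γ - 1) * X.card ≤ r - 1)
    (hruniv : q univ = (γ - 1) * (univ : Finset T).card + r) :
    ∃ L : Finset T, Bfam q γ r L := by
  obtain ⟨m, hm, hbox⟩ := exists_boxed hq hq0 hP3 hP2 hruniv
  refine ⟨univ.filter (fun s => m s = γ), ?_⟩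
  rw [bfam_iff_chi hruniv]
  rw [← boxed_eq_chi hbox]
  exact hm

lemma matroid_exists {q : Finset T → ℤ} {γ r : ℤ} (hq : Supermodular q) (hq0 : q ∅ = 0)
    (hP3 : ∀ X : Finset T, q X ≤ γ * X.card)
    (hP2 : ∀ X : Finset T, X ≠ univ → q X - (γ - 1) * X.card ≤ r - 1)
    (hruniv : q univ = (γ - 1) * (univ : Finset T).card + r) :
    ∃ M : Matroid T, M.E = Set.univ ∧
      ∀ B : Set T, M.IsBase B ↔ ∃ L : Finset T, ↑L = B ∧ Bfam q γ r L := by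
  classical
  obtain ⟨L₀, hL₀⟩ := bfam_nonempty hq hq0 hP3 hP2 hruniv
  set Ind : Set T → Prop := fun I => ∃ L, Bfam q γ r L ∧ I ⊆ ↑L with hInd
  have indep_empty : Ind ∅ := ⟨L₀, hL₀, Set.empty_subset _⟩
  have indep_subset : ∀ ⦃I J : Set T⦄, Ind J → I ⊆ J → Ind I := by
    rintro I J ⟨L, hL, hJL⟩ hIJ
    exact ⟨L, hL, hIJ.trans hJL⟩
  have indep_aug : ∀ ⦃I J : Set T⦄, Ind I → Ind J → I.ncard < J.ncard →
      ∃ e ∈ J, e ∉ I ∧ Ind (insert e I) := by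
    rintro I J ⟨LI, hLI, hILI⟩ ⟨LJ, hLJ, hJLJ⟩ hIJ
    have hIfin : I.Finite := Set.toFinite I
    have hJfin : J.Finite := Set.toFinite J
    set A := hIfin.toFinset with hA
    set B := hJfin.toFinset with hB
    have hAco : (A : Set T) = I := hIfin.coe_toFinset
    have hBco : (B : Set T) = J := hJfin.coe_toFinset
    have hAsub : A ⊆ LI := by
      intro a ha
      have haI : a ∈ I := by
        rw [← hAco]
        exact Finset.mem_coe.mpr ha
      exact Finset.mem_coe.mp (hILI haI)
    have hBsub : B ⊆ LJ := by
      intro a ha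
      have haJ : a ∈ J := by
        rw [← hBco]
        exact Finset.mem_coe.mpr ha
      exact Finset.mem_coe.mp (hJLJ haJ)
    have hcard : A.card < B.card := by
      rwa [Set.ncard_eq_toFinset_card I hIfin, Set.ncard_eq_toFinset_card J hJfin] at hIJ
    obtain ⟨x, hxB, hxA, L, hL, hins⟩ :=
      bfam_aug hq hruniv hLI hLJ hAsub hBsub hcard
    refine ⟨x, ?_, ?_, L, hL, ?_⟩
    · rw [← hBco]; exact hxB
    · rw [← hAco]; exact fun h => hxA (Finset.mem_coe.mp h)
    · rw [← hAco, ← Finset.coe_insert]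
      exact Finset.coe_subset.mpr hins
  set M' := IndepMatroid.ofFinite (Set.finite_univ (α := T)) Ind indep_empty
    indep_subset indep_aug (fun I _ => Set.subset_univ I) with hM'
  refine ⟨M'.matroid, by simp [hM'], ?_⟩
  have hIndep : ∀ I : Set T, M'.matroid.Indep I ↔ Ind I := by
    intro I
    rw [IndepMatroid.matroid_indep_iff, hM', IndepMatroid.ofFinite_indep]
  intro B
  rw [Matroid.isBase_iff_maximal_indep]
  constructor
  · rintro ⟨hind, hmax⟩
    obtain ⟨L, hL, hBL⟩ := (hIndep B).mp hind
    have hLind : M'.matroid.Indep ↑L := (hIndep ↑L).mpr ⟨L, hL, subset_rfl⟩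
    have : (↑L : Set T) ⊆ B := hmax hLind hBL
    exact ⟨L, le_antisymm this hBL, hL⟩
  · rintro ⟨L, hLB, hL⟩
    constructor
    · exact (hIndep B).mpr ⟨L, hL, hLB ▸ subset_rfl⟩
    · intro y hy hsub
      obtain ⟨L₂, hL₂, hyL₂⟩ := (hIndep y).mp hy
      have hLL₂ : L ⊆ L₂ := by
        rw [← Finset.coe_subset]
        exact (hLB ▸ hsub : (↑L : Set T) ⊆ y).trans hyL₂
      have hcards : L₂.card ≤ L.card := by
        have : (L.card : ℤ) = (L₂.card : ℤ) := by rw [hL.1, hL₂.1]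
        omega
      have : L = L₂ := Finset.eq_of_subset_of_card_le hLL₂ hcards
      rw [← hLB, this]
      exact hyL₂
end Stmt7Aux

open Stmt7Aux in
/-- The matroid `M₁` on the peak set `S₁`: an `r₁`-element subset `L` of `S₁`
satisfies `|L ∩ X| ≥ p₁(X) − (β₁ − 1)|X|` for all `X ⊆ S₁` iff `L` is the set of
`β₁`-valued elements of some dec-min element of `Ḃ(p₁)`; this family is nonempty
and forms the family of bases of a matroid on `S₁`. -/
theorem stmt7 [Fintype α] [DecidableEq α] [Nonempty α]
    (p : Finset α → ℤ) (hp : Supermodular p) (h0 : p ∅ = 0)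
    (hne : (Bdot p).Nonempty) (β₁ : ℤ)
    (hβ : IsLeast {b : ℤ | ∃ m ∈ Bdot p, ∀ s : α, m s ≤ b} β₁)
    (S₁ : Finset α)
    (hS₁ : ∀ s : α, s ∈ S₁ ↔ ∀ X : Finset α,
      (∀ Y : Finset α, p Y - (β₁ - 1) * Y.card ≤ p X - (β₁ - 1) * X.card) → s ∈ X) :
    -- (i)
    (∀ L : Finset {a : α // a ∈ S₁},
      (L.card : ℤ) = p S₁ - (β₁ - 1) * S₁.card →
        ((∀ X : Finset {a : α // a ∈ S₁},
            p (X.map (Function.Embedding.subtype (· ∈ S₁))) - (β₁ - 1) * X.card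
              ≤ ((L ∩ X).card : ℤ)) ↔
          (∃ m₁ : {a : α // a ∈ S₁} → ℤ,
            DecMin (fun X : Finset {a : α // a ∈ S₁} =>
              p (X.map (Function.Embedding.subtype (· ∈ S₁)))) m₁ ∧
            L = Finset.univ.filter (fun s => m₁ s = β₁)))) ∧
    -- (ii) nonemptiness of ℬ₁
    (∃ L : Finset {a : α // a ∈ S₁},
      (L.card : ℤ) = p S₁ - (β₁ - 1) * S₁.card ∧
      ∀ X : Finset {a : α // a ∈ S₁},
        p (X.map (Function.Embedding.subtype (· ∈ S₁))) - (β₁ - 1) * X.card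
          ≤ ((L ∩ X).card : ℤ)) ∧
    -- (ii) ℬ₁ is the base family of a matroid on S₁
    (∃ M : Matroid {a : α // a ∈ S₁}, M.E = Set.univ ∧
      ∀ B : Set {a : α // a ∈ S₁}, M.IsBase B ↔
        ∃ L : Finset {a : α // a ∈ S₁}, ↑L = B ∧
          (L.card : ℤ) = p S₁ - (β₁ - 1) * S₁.card ∧
          ∀ X : Finset {a : α // a ∈ S₁},
            p (X.map (Function.Embedding.subtype (· ∈ S₁))) - (β₁ - 1) * X.card
              ≤ ((L ∩ X).card : ℤ)) := by
  classical
  -- the maximizers of h(X) = p X - (β₁-1)|X| form a lattice whose minimum is S₁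
  have hinter : ∀ X Y : Finset α,
      (∀ Z : Finset α, p Z - (β₁ - 1) * Z.card ≤ p X - (β₁ - 1) * X.card) →
      (∀ Z : Finset α, p Z - (β₁ - 1) * Z.card ≤ p Y - (β₁ - 1) * Y.card) →
      (∀ Z : Finset α, p Z - (β₁ - 1) * Z.card ≤ p (X ∩ Y) - (β₁ - 1) * (X ∩ Y).card) := by
    intro X Y hX hY Z
    have h1 := hp X Y
    have hc : ((X ∩ Y).card : ℤ) + ((X ∪ Y).card : ℤ) = (X.card : ℤ) + (Y.card : ℤ) := by
      exact_mod_cast Finset.card_inter_add_card_union X Y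
    have hmul : (β₁ - 1) * ((X ∩ Y).card : ℤ) + (β₁ - 1) * ((X ∪ Y).card : ℤ)
        = (β₁ - 1) * (X.card : ℤ) + (β₁ - 1) * (Y.card : ℤ) := by
      linear_combination (β₁ - 1) * hc
    have h3 := hX (X ∪ Y)
    have h4 := hY Z
    linarith
  have hmax_exists : ∃ X₀ : Finset α,
      ∀ Y : Finset α, p Y - (β₁ - 1) * Y.card ≤ p X₀ - (β₁ - 1) * X₀.card := by
    obtain ⟨X₀, _, hX₀⟩ := Finset.exists_max_image ((univ : Finset α)).powerset
      (fun X => p X - (β₁ - 1) * X.card) ⟨∅, by simp⟩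
    exact ⟨X₀, fun Y => hX₀ Y (Finset.mem_powerset.mpr (Finset.subset_univ Y))⟩
  obtain ⟨X₀, hX₀⟩ := hmax_exists
  set F : Finset (Finset α) := (univ : Finset α).powerset.filter
    (fun X => ∀ Y : Finset α, p Y - (β₁ - 1) * Y.card ≤ p X - (β₁ - 1) * X.card) with hF
  have hX₀mem : X₀ ∈ F :=
    Finset.mem_filter.mpr ⟨Finset.mem_powerset.mpr (Finset.subset_univ X₀), hX₀⟩
  have hFne : F.Nonempty := ⟨X₀, hX₀mem⟩
  have hCmax : ∀ Y : Finset α, p Y - (β₁ - 1) * Y.card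
      ≤ p (F.inf' hFne id) - (β₁ - 1) * (F.inf' hFne id).card := by
    apply Finset.inf'_induction
      (p := fun X => ∀ Y : Finset α, p Y - (β₁ - 1) * Y.card ≤ p X - (β₁ - 1) * X.card)
    · intro a ha b hb
      rw [Finset.inf_eq_inter]
      exact hinter a b ha hb
    · intro X hX
      exact (Finset.mem_filter.mp hX).2
  have hS₁C : S₁ = F.inf' hFne id := by
    ext s
    constructor
    · intro hs
      have hs' := (hS₁ s).mp hs
      apply Finset.inf'_induction (p := fun X => s ∈ X)
      · intro a ha b hb
        rw [Finset.inf_eq_inter]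
        exact Finset.mem_inter.mpr ⟨ha, hb⟩
      · intro X hX
        exact hs' X (Finset.mem_filter.mp hX).2
    · intro hs
      apply (hS₁ s).mpr
      intro X hXmax
      have hXmem : X ∈ F :=
        Finset.mem_filter.mpr ⟨Finset.mem_powerset.mpr (Finset.subset_univ X), hXmax⟩
      exact Finset.inf'_le id hXmem hs
  have hmaxS₁ : ∀ Y : Finset α, p Y - (β₁ - 1) * Y.card ≤ p S₁ - (β₁ - 1) * S₁.card := by
    rw [hS₁C]
    exact hCmax
  have hstrict : ∀ Y : Finset α, Y ⊆ S₁ → Y ≠ S₁ →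
      p Y - (β₁ - 1) * Y.card ≤ p S₁ - (β₁ - 1) * S₁.card - 1 := by
    intro Y hsub hne
    by_contra hcon
    push_neg at hcon
    have hYmax : ∀ Z : Finset α, p Z - (β₁ - 1) * Z.card ≤ p Y - (β₁ - 1) * Y.card := by
      intro Z
      have h1 := hmaxS₁ Z
      have h2 := hmaxS₁ Y
      omega
    have hsup : S₁ ⊆ Y := fun s hs => (hS₁ s).mp hs Y hYmax
    exact hne (Finset.Subset.antisymm hsub hsup)
  -- pass to the subtype
  set q : Finset {a : α // a ∈ S₁} → ℤ :=
    (fun X : Finset {a : α // a ∈ S₁} => p (X.map (Function.Embedding.subtype (· ∈ S₁))))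
    with hqdef
  set r : ℤ := p S₁ - (β₁ - 1) * S₁.card with hrdef
  have hmapuniv : (univ : Finset {a : α // a ∈ S₁}).map
      (Function.Embedding.subtype (· ∈ S₁)) = S₁ := by
    rw [Finset.univ_eq_attach, Finset.attach_map_val]
  have hcarduniv : (((univ : Finset {a : α // a ∈ S₁})).card : ℤ) = (S₁.card : ℤ) := by
    rw [Finset.card_univ, Fintype.card_coe]
  have hq : Supermodular q := by
    intro X Y
    have h1 := hp (X.map (Function.Embedding.subtype (· ∈ S₁)))
      (Y.map (Function.Embedding.subtype (· ∈ S₁)))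
    rw [← Finset.map_inter, ← Finset.map_union] at h1
    exact h1
  have hq0 : q ∅ = 0 := by
    rw [hqdef]
    simp [h0]
  have hruniv : q univ = (β₁ - 1) * ((univ : Finset {a : α // a ∈ S₁}).card : ℤ) + r := by
    rw [hqdef]
    simp only []
    rw [hmapuniv, hcarduniv, hrdef]
    ring
  have hP3 : ∀ X : Finset {a : α // a ∈ S₁}, q X ≤ β₁ * X.card := by
    intro X
    obtain ⟨m, hm, hmb⟩ := hβ.1
    have h1 : q X ≤ ∑ s ∈ X.map (Function.Embedding.subtype (· ∈ S₁)), m s := hm.1 _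
    have h2 : ∑ s ∈ X.map (Function.Embedding.subtype (· ∈ S₁)), m s
        ≤ ∑ s ∈ X.map (Function.Embedding.subtype (· ∈ S₁)), β₁ :=
      Finset.sum_le_sum (fun i _ => hmb i)
    rw [Finset.sum_const, nsmul_eq_mul, Finset.card_map] at h2
    calc q X ≤ _ := h1
    _ ≤ _ := h2
    _ = β₁ * X.card := mul_comm _ _
  have hP2 : ∀ X : Finset {a : α // a ∈ S₁}, X ≠ univ →
      q X - (β₁ - 1) * X.card ≤ r - 1 := by
    intro X hne
    have hsub : X.map (Function.Embedding.subtype (· ∈ S₁)) ⊆ S₁ := by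
      intro a ha
      obtain ⟨a', _, rfl⟩ := Finset.mem_map.mp ha
      simpa using a'.2
    have hne' : X.map (Function.Embedding.subtype (· ∈ S₁)) ≠ S₁ := by
      intro h
      apply hne
      apply Finset.map_injective (Function.Embedding.subtype (· ∈ S₁))
      rw [h, hmapuniv]
    have h1 := hstrict _ hsub hne'
    rw [Finset.card_map] at h1
    have hqX : q X = p (X.map (Function.Embedding.subtype (· ∈ S₁))) := rfl
    rw [hqX]
    exact h1
  refine ⟨?_, ?_, ?_⟩
  · intro L hcard
    constructor
    · intro hineq
      have hBfam : Bfam q β₁ r L := ⟨hcard, hineq⟩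
      have hchi := (bfam_iff_chi hruniv L).mp hBfam
      refine ⟨chi β₁ L, decmin_chi hruniv hchi, ?_⟩
      ext s
      simp only [Finset.mem_filter, Finset.mem_univ, true_and, chi]
      by_cases h : s ∈ L
      · simp [h]
      · simp [h]
    · rintro ⟨m₁, hdm, hLdef⟩
      have hbox := decmin_values hq hq0 hP3 hP2 hruniv hdm
      have hm₁eq : m₁ = chi β₁ (univ.filter (fun s => m₁ s = β₁)) := boxed_eq_chi hbox
      have hmem : chi β₁ (univ.filter (fun s => m₁ s = β₁)) ∈ Bdot q := hm₁eq ▸ hdm.1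
      have hBfam := (bfam_iff_chi hruniv _).mpr hmem
      rw [hLdef]
      exact hBfam.2
  · obtain ⟨L, hL⟩ := bfam_nonempty hq hq0 hP3 hP2 hruniv
    exact ⟨L, hL.1, hL.2⟩
  · obtain ⟨M, hME, hMB⟩ := matroid_exists hq hq0 hP3 hP2 hruniv
    refine ⟨M, hME, fun B => ?_⟩
    rw [hMB B]
    constructor
    · rintro ⟨L, h1, h2⟩
      exact ⟨L, h1, h2.1, h2.2⟩
    · rintro ⟨L, h1, h2, h3⟩
      exact ⟨L, h1, h2, h3⟩
end
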